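/- arXiv:1410.2996 — 9 statements merged into one kernel-verified Lean document; each statement's English description precedes it below -/
import Mathlib

section
/- For every n < ω, every Hausdorff topological group belonging to the class SSGP(n) also belongs to the class SSGP(n+1); consequently SSGP(n) ⊆ SSGP(m) whenever n < m < ω. -/
universe u v

/-- The classes SSGP(n) of Hausdorff topological groups: `SSGP 0 G` iff `G` is
trivial; `SSGP (n+1) G` iff for every neighborhood `U` of `1` there is a family
`𝓗` of subgroups of `G`, each contained in `U`, such that the closure `N` of the
subgroup generated by `⋃ 𝓗` is normal and `G ⧸ N` (with the quotient topology)
belongs to `SSGP n`. -/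
def SSGP : ℕ → ∀ (G : Type u) [Group G] [TopologicalSpace G] [IsTopologicalGroup G], Prop
  | 0, G, _, _, _ => Subsingleton G
  | n + 1, G, _, _, _ =>
      ∀ U ∈ nhds (1 : G), ∃ 𝓗 : Set (Subgroup G),
        (∀ H ∈ 𝓗, (H : Set G) ⊆ U) ∧
        ∃ hN : (Subgroup.closure (⋃ H ∈ 𝓗, (H : Set G))).topologicalClosure.Normal,
          haveI := hN
          SSGP n (G ⧸ (Subgroup.closure (⋃ H ∈ 𝓗, (H : Set G))).topologicalClosure)

/-- Helper for rewriting the subgroup in the quotient inside `SSGP`. -/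
lemma ssgp_quot_of_eq {n : ℕ} {G : Type u} [Group G] [TopologicalSpace G]
    [IsTopologicalGroup G] {P Q : Subgroup G} (h : P = Q) (hQ : Q.Normal)
    (hs : haveI := hQ; SSGP n (G ⧸ Q)) :
    ∃ hN : P.Normal, haveI := hN; SSGP n (G ⧸ P) := by
  subst h; exact ⟨hQ, hs⟩

/-- `SSGP n` is invariant under group isomorphisms that are homeomorphisms. -/
lemma ssgp_congr (n : ℕ) : ∀ {G G' : Type u} [Group G] [TopologicalSpace G]
    [IsTopologicalGroup G] [Group G'] [TopologicalSpace G'] [IsTopologicalGroup G']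
    (e : G ≃* G'), Continuous e → Continuous e.symm → SSGP n G → SSGP n G' := by
  induction n with
  | zero =>
    intro G G' _ _ _ _ _ _ e hc hc' h
    haveI : Subsingleton G := h
    exact e.symm.toEquiv.subsingleton
  | succ n ih =>
    intro G G' _ _ _ _ _ _ e hc hc' h U' hU'
    have hU : ⇑e ⁻¹' U' ∈ nhds (1 : G) := by
      have := hc.continuousAt (x := (1 : G))
      apply this.preimage_mem_nhds
      simpa using hU'
    obtain ⟨𝓗, hsub, hN, hq⟩ := h _ hU
    set f := e.toMonoidHom with hf
    have hcoe : ⇑f = ⇑e := rfl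
    -- the homeomorphism underlying e
    let hm : G ≃ₜ G' := ⟨e.toEquiv, hc, hc'⟩
    set N := (Subgroup.closure (⋃ H ∈ 𝓗, (H : Set G))).topologicalClosure with hNdef
    refine ⟨(Subgroup.map f) '' 𝓗, ?_, ?_⟩
    · rintro H' ⟨H, hH, rfl⟩ x hx
      rw [Subgroup.coe_map] at hx
      obtain ⟨y, hy, rfl⟩ := hx
      exact hsub H hH hy
    · -- key: the closed generated subgroup on the G' side is the image of N
      have hmapcl : ∀ K : Subgroup G,
          (Subgroup.map f K).topologicalClosure = Subgroup.map f K.topologicalClosure := by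
        intro K
        apply SetLike.ext'
        rw [Subgroup.topologicalClosure_coe, Subgroup.coe_map, Subgroup.coe_map,
          Subgroup.topologicalClosure_coe, hcoe]
        exact (hm.image_closure (K : Set G)).symm
      have hunion : (⋃ H' ∈ (Subgroup.map f) '' 𝓗, (H' : Set G'))
          = ⇑e '' (⋃ H ∈ 𝓗, (H : Set G)) := by
        rw [Set.biUnion_image, Set.image_iUnion₂]
        simp [Subgroup.coe_map, hcoe]
      have key : (Subgroup.closure (⋃ H' ∈ (Subgroup.map f) '' 𝓗, (H' : Set G'))).topologicalClosure
          = Subgroup.map f N := by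
        rw [hunion, ← hcoe, ← MonoidHom.map_closure, hmapcl, hNdef]
      haveI := hN
      haveI hN' : (Subgroup.map f N).Normal := hN.map f e.surjective
      refine ssgp_quot_of_eq key hN' ?_
      -- transfer along the induced iso of quotients
      have hmapN : N.map (e : G →* G') = Subgroup.map f N := rfl
      let e' : (G ⧸ N) ≃* (G' ⧸ Subgroup.map f N) :=
        QuotientGroup.congr N (Subgroup.map f N) e hmapN
      have hce : Continuous e' := by
        rw [(QuotientGroup.isQuotientMap_mk N).continuous_iff]
        have : ⇑e' ∘ (QuotientGroup.mk : G → G ⧸ N)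
            = (QuotientGroup.mk : G' → G' ⧸ Subgroup.map f N) ∘ ⇑e := by
          funext x
          exact QuotientGroup.congr_mk N (Subgroup.map f N) e hmapN x
        rw [this]
        exact QuotientGroup.continuous_mk.comp hc
      have hce' : Continuous e'.symm := by
        rw [(QuotientGroup.isQuotientMap_mk (Subgroup.map f N)).continuous_iff]
        have : ⇑e'.symm ∘ (QuotientGroup.mk : G' → G' ⧸ Subgroup.map f N)
            = (QuotientGroup.mk : G → G ⧸ N) ∘ ⇑e.symm := by
          funext x
          rfl
        rw [this]
        exact QuotientGroup.continuous_mk.comp hc'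
      exact ih e' hce hce' hq

/-- For every `n < ω`, `SSGP n ⊆ SSGP (n+1)`; consequently `SSGP n ⊆ SSGP m`
whenever `n < m < ω`. -/
theorem ssgp_n_subset_ssgp_succ_and_mono :
    (∀ (n : ℕ) (G : Type u) [Group G] [TopologicalSpace G] [IsTopologicalGroup G] [T2Space G],
      SSGP n G → SSGP (n + 1) G) ∧
    (∀ n m : ℕ, n < m →
      ∀ (G : Type u) [Group G] [TopologicalSpace G] [IsTopologicalGroup G] [T2Space G],
        SSGP n G → SSGP m G) := by
  have part1 : ∀ (n : ℕ) (G : Type u) [Group G] [TopologicalSpace G] [IsTopologicalGroup G]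
      [T2Space G], SSGP n G → SSGP (n + 1) G := by
    intro n G _ _ _ _ hG U hU
    refine ⟨∅, by simp, ?_⟩
    have hempty : (⋃ H ∈ (∅ : Set (Subgroup G)), (H : Set G)) = ∅ := by simp
    have hbot : (Subgroup.closure (⋃ H ∈ (∅ : Set (Subgroup G)), (H : Set G))).topologicalClosure
        = (⊥ : Subgroup G) := by
      rw [hempty, Subgroup.closure_empty]
      apply SetLike.ext'
      rw [Subgroup.topologicalClosure_coe, Subgroup.coe_bot]
      exact isClosed_singleton.closure_eq
    refine ssgp_quot_of_eq hbot inferInstance ?_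
    -- transfer SSGP n from G to G ⧸ ⊥
    let e : G ≃* G ⧸ (⊥ : Subgroup G) := (QuotientGroup.quotientBot (G := G)).symm
    have hce : Continuous e := QuotientGroup.continuous_mk
    have hce' : Continuous e.symm := by
      rw [(QuotientGroup.isQuotientMap_mk (⊥ : Subgroup G)).continuous_iff]
      have : ⇑e.symm ∘ (QuotientGroup.mk : G → G ⧸ (⊥ : Subgroup G)) = id := by
        funext x
        rfl
      rw [this]
      exact continuous_id
    exact ssgp_congr n e hce hce' hG
  refine ⟨part1, ?_⟩
  intro n m hnm
  induction m with
  | zero => omega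
  | succ m ih =>
    intro G _ _ _ _ hG
    rcases eq_or_lt_of_le (Nat.lt_succ_iff.mp hnm) with rfl | h
    · exact part1 n G hG
    · exact part1 m G (ih h G hG)
end

section
/- Let G be a nontrivial Hausdorff topological group for which some neighborhood U of the identity 1_G contains no subgroup of G other than the trivial subgroup {1_G}. Then there is no n < ω such that G ∈ SSGP(n). -/
universe u v

theorem ssgp_aux (n : ℕ) :
    ∀ (G : Type u) [Group G] [TopologicalSpace G] [IsTopologicalGroup G],
      Nontrivial G → IsClosed ({1} : Set G) →
      ∀ U : Set G, U ∈ nhds (1 : G) →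
      (∀ H : Subgroup G, (H : Set G) ⊆ U → H = ⊥) → ¬ SSGP n G := by
  induction n with
  | zero =>
    intro G _ _ _ hnt _ U _ _ h
    exact (not_subsingleton G) h
  | succ n ih =>
    intro G _ _ _ hnt hcl U hU hsmall h
    obtain ⟨𝓗, h𝓗, hN, hq⟩ := h U hU
    set N : Subgroup G := (Subgroup.closure (⋃ H ∈ 𝓗, (H : Set G))).topologicalClosure with hNdef
    -- the generated subgroup is trivial
    have hsub : (⋃ H ∈ 𝓗, (H : Set G)) ⊆ ((⊥ : Subgroup G) : Set G) := by
      intro x hx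
      simp only [Set.mem_iUnion] at hx
      obtain ⟨H, hH, hxH⟩ := hx
      rw [hsmall H (h𝓗 H hH)] at hxH
      exact hxH
    have hclbot : Subgroup.closure (⋃ H ∈ 𝓗, (H : Set G)) = ⊥ :=
      le_bot_iff.mp ((Subgroup.closure_le ⊥).mpr hsub)
    have hNbot : N = ⊥ := by
      refine le_bot_iff.mp (Subgroup.topologicalClosure_minimal _ (le_of_eq hclbot) ?_)
      simpa [Subgroup.coe_bot] using hcl
    -- facts about the quotient map
    have hinj : Function.Injective (QuotientGroup.mk : G → G ⧸ N) := by
      intro a b hab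
      have : a⁻¹ * b ∈ N := QuotientGroup.eq.mp hab
      rw [hNbot, Subgroup.mem_bot] at this
      exact (inv_mul_eq_one.mp this)
    have hsurj : Function.Surjective (QuotientGroup.mk : G → G ⧸ N) :=
      QuotientGroup.mk_surjective
    have hopen : IsOpenMap (QuotientGroup.mk : G → G ⧸ N) :=
      QuotientGroup.isOpenMap_coe
    -- transfer hypotheses to the quotient
    have hnt' : Nontrivial (G ⧸ N) := hinj.nontrivial
    have hcl' : IsClosed ({1} : Set (G ⧸ N)) := by
      rw [← (QuotientGroup.isQuotientMap_mk N).isClosed_preimage]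
      have : (QuotientGroup.mk : G → G ⧸ N) ⁻¹' {1} = (N : Set G) := by
        ext x
        simp [QuotientGroup.eq_one_iff]
      rw [this]
      exact (Subgroup.closure (⋃ H ∈ 𝓗, (H : Set G))).isClosed_topologicalClosure
    have hU' : (QuotientGroup.mk : G → G ⧸ N) '' U ∈ nhds (1 : G ⧸ N) := by
      have := hopen.image_mem_nhds hU
      simpa using this
    have hsmall' : ∀ H : Subgroup (G ⧸ N),
        (H : Set (G ⧸ N)) ⊆ (QuotientGroup.mk : G → G ⧸ N) '' U → H = ⊥ := by
      intro H' hH'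
      have hK : (H'.comap (QuotientGroup.mk' N) : Set G) ⊆ U := by
        intro x hx
        have hmem : ((x : G ⧸ N)) ∈ H' := hx
        obtain ⟨u, hu, huv⟩ := hH' hmem
        rwa [← hinj huv]
      have : H'.comap (QuotientGroup.mk' N) = ⊥ := hsmall _ hK
      have hmap := Subgroup.map_comap_eq_self_of_surjective (f := QuotientGroup.mk' N) hsurj H'
      rw [this, Subgroup.map_bot] at hmap
      exact hmap.symm
    exact ih (G ⧸ N) hnt' hcl' _ hU' hsmall' hq

/-- If some neighborhood `U` of the identity of a nontrivial Hausdorff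
topological group `G` contains no subgroup other than the trivial one, then
`G ∈ SSGP(n)` for no `n < ω`. -/
theorem not_ssgp_of_small_nhd (G : Type u) [Group G] [TopologicalSpace G]
    [IsTopologicalGroup G] [T2Space G] [Nontrivial G]
    (U : Set G) (hU : U ∈ nhds (1 : G))
    (hsmall : ∀ H : Subgroup G, (H : Set G) ⊆ U → H = ⊥) :
    ¬ ∃ n : ℕ, SSGP n G := by
  rintro ⟨n, hn⟩
  exact ssgp_aux n G ‹_› isClosed_singleton U hU hsmall hn
end

section
/- Let G be a nontrivial finitely cogenerated Hausdorff topological group. Then there is no n < ω such that G ∈ SSGP(n). -/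
universe u v

/-- A group is finitely cogenerated if some finite set `C` with `1 ∉ C` meets
every subgroup with more than one element. -/
def FinitelyCogenerated (G : Type u) [Group G] : Prop :=
  ∃ C : Finset G, (1 : G) ∉ (C : Set G) ∧
    ∀ H : Subgroup G, H ≠ ⊥ → ∃ c ∈ C, c ∈ H

lemma finitelyCogenerated_of_mulEquiv {G : Type u} {G' : Type v} [Group G] [Group G']
    (e : G ≃* G') (hG : FinitelyCogenerated G) : FinitelyCogenerated G' := by
  classical
  obtain ⟨C, hC1, hCcog⟩ := hG
  refine ⟨C.image e, ?_, ?_⟩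
  · simp only [Finset.coe_image, Set.mem_image]
    rintro ⟨c, hc, hc1⟩
    exact hC1 (by simpa using (show c = 1 from by
      have := e.injective (by simpa using hc1); simpa using this) ▸ hc)
  · intro H hH
    have hcom : H.comap e.toMonoidHom ≠ ⊥ := by
      intro hbot
      apply hH
      rw [Subgroup.eq_bot_iff_forall] at hbot ⊢
      intro x hx
      have : e.symm x ∈ H.comap e.toMonoidHom := by
        simp [Subgroup.mem_comap, hx]
      have := hbot _ this
      have : x = e 1 := by rw [← this]; simp
      simpa using this
    obtain ⟨c, hc, hcH⟩ := hCcog _ hcom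
    exact ⟨e c, Finset.mem_image_of_mem _ hc, hcH⟩

lemma not_ssgp_aux : ∀ (n : ℕ) (G : Type u) [Group G] [TopologicalSpace G]
    [IsTopologicalGroup G] [T2Space G] [Nontrivial G],
    FinitelyCogenerated G → ¬ SSGP n G := by
  intro n
  induction n with
  | zero =>
    intro G _ _ _ _ _ _ hS
    exact not_subsingleton G hS
  | succ n ih =>
    intro G _ _ _ _ _ hG hS
    obtain ⟨C, hC1, hCcog⟩ := hG
    have hUopen : IsOpen ((C : Set G)ᶜ) := (Set.Finite.isClosed C.finite_toSet).isOpen_compl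
    have hUmem : (C : Set G)ᶜ ∈ nhds (1 : G) := hUopen.mem_nhds hC1
    obtain ⟨𝓗, hsub, hN, hq⟩ := hS _ hUmem
    -- every member of 𝓗 is trivial
    have hbot : ∀ H ∈ 𝓗, H = ⊥ := by
      intro H hH
      by_contra hne
      obtain ⟨c, hc, hcH⟩ := hCcog H hne
      exact hsub H hH hcH hc
    set N := (Subgroup.closure (⋃ H ∈ 𝓗, (H : Set G))).topologicalClosure with hNdef
    have hclos : Subgroup.closure (⋃ H ∈ 𝓗, (H : Set G)) = ⊥ := by
      rw [Subgroup.closure_eq_bot_iff]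
      intro x hx
      simp only [Set.mem_iUnion] at hx
      obtain ⟨H, hH, hxH⟩ := hx
      rw [hbot H hH] at hxH
      simpa using hxH
    have hNbot : N = ⊥ := by
      ext x
      simp only [Subgroup.mem_bot]
      constructor
      · intro hx
        have hx' : x ∈ closure ((Subgroup.closure (⋃ H ∈ 𝓗, (H : Set G))) : Set G) := hx
        rw [hclos] at hx'
        have hb : ((⊥ : Subgroup G) : Set G) = ({1} : Set G) := by ext; simp
        rw [hb, closure_singleton] at hx'
        simpa using hx'
      · rintro rfl
        exact one_mem N
    -- transfer structure to the quotient
    haveI : Nontrivial (G ⧸ N) := by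
      obtain ⟨a, b, hab⟩ := exists_pair_ne G
      refine ⟨QuotientGroup.mk a, QuotientGroup.mk b, fun h => hab ?_⟩
      have := QuotientGroup.eq.mp h
      rw [hNbot, Subgroup.mem_bot] at this
      have : a⁻¹ * b = 1 := this
      group at this ⊢
      exact (eq_of_inv_mul_eq_one ‹a⁻¹ * b = 1›)
    haveI : IsClosed (N : Set G) := Subgroup.isClosed_topologicalClosure _
    haveI : T2Space (G ⧸ N) := inferInstance
    have hfc : FinitelyCogenerated (G ⧸ N) := by
      haveI : (⊥ : Subgroup G).Normal := inferInstance
      exact finitelyCogenerated_of_mulEquiv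
        (((QuotientGroup.quotientMulEquivOfEq hNbot).trans QuotientGroup.quotientBot).symm)
        ⟨C, hC1, hCcog⟩
    exact ih (G ⧸ N) hfc hq

/-- A nontrivial finitely cogenerated Hausdorff topological group belongs to
`SSGP(n)` for no `n < ω`. -/
theorem not_ssgp_of_finitelyCogenerated (G : Type u) [Group G] [TopologicalSpace G]
    [IsTopologicalGroup G] [T2Space G] [Nontrivial G]
    (hG : FinitelyCogenerated G) :
    ¬ ∃ n : ℕ, SSGP n G := by
  rintro ⟨n, hn⟩
  exact not_ssgp_aux n G hG hn
end

section
/- The additive group ℤ of integers does not admit an SSGP(n) topology for any n < ω; that is, there is no n < ω and no Hausdorff group topology 𝒯 on ℤ such that (ℤ,𝒯) ∈ SSGP(n). -/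
universe u v

/-- The classes SSGP(n) of Hausdorff topological groups, additive version:
`AddSSGP 0 G` iff `G` is trivial; `AddSSGP (n+1) G` iff for every neighborhood
`U` of `0` there is a family `𝓗` of subgroups of `G`, each contained in `U`,
such that the closure `N` of the subgroup generated by `⋃ 𝓗` is normal and
`G ⧸ N` (with the quotient topology) belongs to `AddSSGP n`. -/
def AddSSGP : ℕ → ∀ (G : Type u) [AddGroup G] [TopologicalSpace G] [IsTopologicalAddGroup G], Prop
  | 0, G, _, _, _ => Subsingleton G
  | n + 1, G, _, _, _ =>
      ∀ U ∈ nhds (0 : G), ∃ 𝓗 : Set (AddSubgroup G),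
        (∀ H ∈ 𝓗, (H : Set G) ⊆ U) ∧
        ∃ hN : (AddSubgroup.closure (⋃ H ∈ 𝓗, (H : Set G))).topologicalClosure.Normal,
          haveI := hN
          AddSSGP n (G ⧸ (AddSubgroup.closure (⋃ H ∈ 𝓗, (H : Set G))).topologicalClosure)

private lemma addComm_of_equiv_int {G : Type} [AddGroup G] (e : G ≃+ ℤ) (x y : G) :
    x + y = y + x := e.injective (by simp [add_comm])

private lemma normal_of_equiv_int {G : Type} [AddGroup G] (e : G ≃+ ℤ) (K : AddSubgroup G) :
    K.Normal := by
  constructor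
  intro n hn g
  have : g + n + -g = n := by
    rw [addComm_of_equiv_int e g n, add_neg_cancel_right]
  rwa [this]

private lemma finite_quotient_of_ne_bot {G : Type} [AddGroup G] (e : G ≃+ ℤ)
    (K : AddSubgroup G) (hK : K ≠ ⊥) : Finite (G ⧸ K) := by
  haveI := normal_of_equiv_int e K
  obtain ⟨a, ha⟩ := Int.subgroup_cyclic (K.map (e : G →+ ℤ))
  have ha' : K.map (e : G →+ ℤ) = AddSubgroup.zmultiples a := by
    rw [ha, AddSubgroup.zmultiples_eq_closure]
  have hane : a ≠ 0 := by
    rintro rfl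
    apply hK
    have : K.map (e : G →+ ℤ) = ⊥ := by
      rw [ha']
      ext x
      simp [AddSubgroup.mem_zmultiples_iff]
    have hinj : Function.Injective (e : G →+ ℤ) := e.injective
    exact AddSubgroup.map_injective hinj
      (this.trans (AddSubgroup.map_bot (e : G →+ ℤ)).symm)
  have E1 : G ⧸ K ≃+ ℤ ⧸ AddSubgroup.zmultiples a :=
    QuotientAddGroup.congr K (AddSubgroup.zmultiples a) e ha'
  have E2 : ℤ ⧸ AddSubgroup.zmultiples a ≃+ ZMod a.natAbs :=
    Int.quotientZMultiplesEquivZMod a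
  haveI : NeZero a.natAbs := ⟨by simpa using hane⟩
  exact Finite.of_equiv _ (E1.trans E2).toEquiv.symm

private lemma ssgp_discrete (n : ℕ) :
    ∀ (G : Type u) [AddGroup G] [TopologicalSpace G] [IsTopologicalAddGroup G]
      [DiscreteTopology G], AddSSGP n G → Subsingleton G := by
  induction n with
  | zero => intro G _ _ _ _ h; exact h
  | succ n ih =>
    intro G _ _ _ _ h
    obtain ⟨𝓗, hsub, hN, hq⟩ := h ({0} : Set G) ((isOpen_discrete _).mem_nhds rfl)
    set N := (AddSubgroup.closure (⋃ H ∈ 𝓗, (H : Set G))).topologicalClosure with hNdef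
    have h1 : AddSubgroup.closure (⋃ H ∈ 𝓗, (H : Set G)) ≤ ⊥ := by
      rw [AddSubgroup.closure_le]
      refine Set.iUnion₂_subset fun H hH => ?_
      intro x hx
      have := hsub H hH hx
      simpa using this
    have hNle : N ≤ ⊥ :=
      AddSubgroup.topologicalClosure_minimal _ h1 (isClosed_discrete _)
    haveI := hN
    haveI : DiscreteTopology (G ⧸ N) := QuotientAddGroup.discreteTopology (N := N) (isOpen_discrete _)
    haveI hs := ih (G ⧸ N) hq
    constructor
    intro a b
    have hmk : (QuotientAddGroup.mk a : G ⧸ N) = QuotientAddGroup.mk b :=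
      Subsingleton.elim _ _
    have h2 : -a + b ∈ N := (QuotientAddGroup.eq (s := N)).mp hmk
    have h3 : -a + b = 0 := by simpa using hNle h2
    exact neg_add_eq_zero.mp h3

private lemma ssgp_int (n : ℕ) :
    ∀ (G : Type) [AddGroup G] [TopologicalSpace G] [IsTopologicalAddGroup G]
      [T2Space G] (e : G ≃+ ℤ), ¬ AddSSGP n G := by
  induction n with
  | zero =>
    intro G _ _ _ _ e h
    haveI : Subsingleton G := h
    exact (by norm_num : (0 : ℤ) ≠ 1) (e.symm.injective (Subsingleton.elim _ _))
  | succ n ih =>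
    intro G _ _ _ _ e h
    -- the element `a` corresponding to `1 ∈ ℤ`
    set a : G := e.symm 1 with hadef
    have hane : a ≠ 0 := by
      intro h0
      have h1 : e a = 0 := by rw [h0, map_zero]
      rw [hadef] at h1
      simp at h1
    -- a closed neighborhood `t` of `0` avoiding `a`
    have hmem : ({a}ᶜ : Set G) ∈ nhds (0 : G) :=
      (isOpen_compl_singleton).mem_nhds (by simpa using (Ne.symm hane))
    obtain ⟨t, htmem, htcl, htsub⟩ := exists_mem_nhds_isClosed_subset hmem
    obtain ⟨𝓗, hsub, hN, hq⟩ := h t htmem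
    by_cases htriv : ∀ H ∈ 𝓗, H = (⊥ : AddSubgroup G)
    · -- all subgroups trivial: N = ⊥, quotient is a copy of ℤ
      set N := (AddSubgroup.closure (⋃ H ∈ 𝓗, (H : Set G))).topologicalClosure with hNdef
      have h1 : AddSubgroup.closure (⋃ H ∈ 𝓗, (H : Set G)) ≤ ⊥ := by
        rw [AddSubgroup.closure_le]
        refine Set.iUnion₂_subset fun H hH => ?_
        rw [htriv H hH]
      have hNbot : N = ⊥ := le_bot_iff.mp <|
        AddSubgroup.topologicalClosure_minimal _ h1 (by
          rw [AddSubgroup.coe_bot]; exact isClosed_singleton)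
      haveI := hN
      haveI : IsClosed (N : Set G) := AddSubgroup.isClosed_topologicalClosure _
      have hinj : Function.Injective (QuotientAddGroup.mk' N) :=
        (AddMonoidHom.ker_eq_bot_iff _).mp (by rw [QuotientAddGroup.ker_mk', hNbot])
      have E : G ≃+ G ⧸ N :=
        AddEquiv.ofBijective (QuotientAddGroup.mk' N)
          ⟨hinj, QuotientAddGroup.mk'_surjective N⟩
      exact ih (G ⧸ N) (E.symm.trans e) hq
    · -- some nontrivial subgroup inside `t`
      push_neg at htriv
      obtain ⟨H₀, hH₀mem, hH₀ne⟩ := htriv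
      set K := H₀.topologicalClosure with hKdef
      have hKcl : IsClosed (K : Set G) := AddSubgroup.isClosed_topologicalClosure _
      have hKne : K ≠ ⊥ := by
        intro hb
        exact hH₀ne (le_bot_iff.mp (hb ▸ AddSubgroup.le_topologicalClosure H₀))
      have hKsubt : (K : Set G) ⊆ t := by
        rw [hKdef, AddSubgroup.topologicalClosure_coe]
        exact closure_minimal (hsub H₀ hH₀mem) htcl
      have haK : a ∉ K := fun hx => (htsub (hKsubt hx)) rfl
      haveI := normal_of_equiv_int e K
      haveI : Finite (G ⧸ K) := finite_quotient_of_ne_bot e K hKne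
      haveI : K.FiniteIndex := AddSubgroup.finiteIndex_of_finite_quotient (H := K)
      have hKopen : IsOpen (K : Set G) :=
        AddSubgroup.isOpen_of_isClosed_of_finiteIndex K hKcl
      -- apply SSGP to the open subgroup K
      obtain ⟨𝓗', hsub', hN', hq'⟩ := h (K : Set G) (hKopen.mem_nhds K.zero_mem)
      set N' := (AddSubgroup.closure (⋃ H ∈ 𝓗', (H : Set G))).topologicalClosure with hN'def
      have hN'leK : N' ≤ K := by
        refine AddSubgroup.topologicalClosure_minimal _ ?_ hKcl
        rw [AddSubgroup.closure_le]
        exact Set.iUnion₂_subset fun H hH => hsub' H hH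
      haveI := hN'
      haveI : IsClosed (N' : Set G) := AddSubgroup.isClosed_topologicalClosure _
      by_cases hb : N' = ⊥
      · have hinj : Function.Injective (QuotientAddGroup.mk' N') :=
          (AddMonoidHom.ker_eq_bot_iff _).mp (by rw [QuotientAddGroup.ker_mk', hb])
        have E : G ≃+ G ⧸ N' :=
          AddEquiv.ofBijective (QuotientAddGroup.mk' N')
            ⟨hinj, QuotientAddGroup.mk'_surjective N'⟩
        exact ih (G ⧸ N') (E.symm.trans e) hq'
      · haveI : Finite (G ⧸ N') := finite_quotient_of_ne_bot e N' hb
        haveI : Subsingleton (G ⧸ N') := ssgp_discrete n (G ⧸ N') hq'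
        have : (QuotientAddGroup.mk a : G ⧸ N') = 0 := Subsingleton.elim _ _
        have haN' : a ∈ N' := (QuotientAddGroup.eq_zero_iff a).mp this
        exact haK (hN'leK haN')

/-- The additive group `ℤ` admits no SSGP(n) topology for any `n < ω`. -/
theorem int_not_exists_ssgp_topology :
    ¬ ∃ (n : ℕ) (t : TopologicalSpace ℤ),
        haveI := t
        ∃ tg : IsTopologicalAddGroup ℤ,
          haveI := tg
          T2Space ℤ ∧ AddSSGP n ℤ := by
  rintro ⟨n, t, tg, ht2, hssgp⟩
  exact @ssgp_int n ℤ _ t tg ht2 (AddEquiv.refl ℤ) hssgp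
end

section
/- Let G and B be Hausdorff topological groups with G ∈ SSGP(n), and let π : G → B be a continuous surjective group homomorphism. Then B ∈ SSGP(n). In particular, if K is a closed normal subgroup of G ∈ SSGP(n), then the quotient group G/K (with the quotient topology) belongs to SSGP(n). -/
universe u v

theorem ssgp_aux_s7 : ∀ (n : ℕ) (G : Type u) (B : Type v) [Group G] [TopologicalSpace G]
    [IsTopologicalGroup G] [Group B] [TopologicalSpace B] [IsTopologicalGroup B],
    SSGP n G → ∀ π : G →* B, Continuous π → Function.Surjective π → SSGP n B := by
  intro n
  induction n with
  | zero =>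
    intro G B _ _ _ _ _ _ h π _ hs
    haveI : Subsingleton G := h
    exact hs.subsingleton
  | succ n ih =>
    intro G B _ _ _ _ _ _ h π hc hs U hU
    have hU' : π ⁻¹' U ∈ nhds (1 : G) := by
      have := hc.continuousAt (x := (1 : G))
      exact this.preimage_mem_nhds (by rwa [map_one])
    obtain ⟨𝓗, h𝓗, hN, hq⟩ := h (π ⁻¹' U) hU'
    set M : Subgroup G := Subgroup.closure (⋃ H ∈ 𝓗, (H : Set G)) with hM
    refine ⟨Subgroup.map π '' 𝓗, ?_, ?_⟩
    · rintro H' ⟨H, hH, rfl⟩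
      rw [Subgroup.coe_map]
      exact (Set.image_mono (h𝓗 H hH)).trans (Set.image_preimage_subset π U)
    have hcup : (⋃ H ∈ Subgroup.map π '' 𝓗, (H : Set B)) = π '' (⋃ H ∈ 𝓗, (H : Set G)) := by
      rw [Set.image_iUnion₂]
      simp_rw [Set.biUnion_image, Subgroup.coe_map]
    set A : Subgroup B := Subgroup.closure (⋃ H ∈ Subgroup.map π '' 𝓗, (H : Set B)) with hA
    have hM' : A = M.map π := by
      rw [hA, hcup, hM, MonoidHom.map_closure]
    have hAset : (A : Set B) = π '' (M : Set G) := by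
      rw [hM', Subgroup.coe_map]
    -- key inclusion : π '' closure M ⊆ closure A
    have hkey : π '' closure (M : Set G) ⊆ closure ((A : Set B)) := by
      rw [hAset]
      exact image_closure_subset_closure_image hc
    have hNle : ∀ g ∈ M.topologicalClosure, π g ∈ A.topologicalClosure := by
      intro g hg
      exact hkey ⟨g, hg, rfl⟩
    -- normality
    have hN' : A.topologicalClosure.Normal := by
      constructor
      intro x hx b
      obtain ⟨g, rfl⟩ := hs b
      have hconj : Continuous fun y : B => π g * y * (π g)⁻¹ := by continuity
      have hx' : x ∈ closure (A : Set B) := hx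
      have key : (fun y : B => π g * y * (π g)⁻¹) x ∈ closure (closure (A : Set B)) := by
        refine map_mem_closure (f := fun y : B => π g * y * (π g)⁻¹) hconj hx' ?_
        intro y hy
        rw [hAset] at hy
        obtain ⟨m, hm, rfl⟩ := hy
        have hmN : g * m * g⁻¹ ∈ closure (M : Set G) :=
          hN.conj_mem m (M.le_topologicalClosure hm) g
        have h2 : π (g * m * g⁻¹) ∈ closure (A : Set B) := hkey ⟨_, hmN, rfl⟩
        simpa [map_mul, map_inv] using h2
      rw [closure_closure] at key
      exact key
    refine ⟨hN', ?_⟩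
    haveI := hN
    haveI := hN'
    have hle : M.topologicalClosure ≤ (A.topologicalClosure).comap π := fun g hg =>
      hNle g hg
    set φ : G ⧸ M.topologicalClosure →* B ⧸ A.topologicalClosure :=
      QuotientGroup.map _ _ π hle with hφ
    have hφc : Continuous φ := by
      rw [(QuotientGroup.isQuotientMap_mk M.topologicalClosure).continuous_iff]
      exact QuotientGroup.continuous_mk.comp hc
    have hφs : Function.Surjective φ := by
      intro b
      obtain ⟨x, rfl⟩ := QuotientGroup.mk_surjective b
      obtain ⟨g, rfl⟩ := hs x
      exact ⟨QuotientGroup.mk g, rfl⟩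
    exact ih _ _ hq φ hφc hφs

/-- Continuous surjective homomorphic images preserve SSGP(n); in particular
Hausdorff quotients by closed normal subgroups preserve SSGP(n). -/
theorem ssgp_of_continuous_surjective :
    (∀ (n : ℕ) (G : Type u) (B : Type v) [Group G] [TopologicalSpace G] [IsTopologicalGroup G]
        [T2Space G] [Group B] [TopologicalSpace B] [IsTopologicalGroup B] [T2Space B],
      SSGP n G → ∀ π : G →* B, Continuous π → Function.Surjective π → SSGP n B) ∧
    (∀ (n : ℕ) (G : Type u) [Group G] [TopologicalSpace G] [IsTopologicalGroup G] [T2Space G],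
      SSGP n G → ∀ (K : Subgroup G) [K.Normal], IsClosed (K : Set G) → SSGP n (G ⧸ K)) := by
  constructor
  · intro n G B _ _ _ _ _ _ _ _ h π hc hs
    exact ssgp_aux_s7 n G B h π hc hs
  · intro n G _ _ _ _ h K _ _
    exact ssgp_aux_s7 n G (G ⧸ K) h (QuotientGroup.mk' K) QuotientGroup.continuous_mk
      (QuotientGroup.mk'_surjective K)
end

section
/- For every Hausdorff topological group G there exist a Hausdorff topological group G* and a group homomorphism e : G → G* such that e is a homeomorphism onto its image, the image e[G] is a closed subgroup of G*, G* is path connected, and G* has the small subgroup generating property (SSGP). -/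
universe u v

/-- The small subgroup generating property: for every neighborhood `U` of the
identity there is a family `𝓗` of subgroups of `G`, each contained in `U`,
such that the subgroup generated by `⋃ 𝓗` is dense in `G`. -/
def HasSSGP (G : Type u) [Group G] [TopologicalSpace G] : Prop :=
  ∀ U ∈ nhds (1 : G), ∃ 𝓗 : Set (Subgroup G),
    (∀ H ∈ 𝓗, (H : Set G) ⊆ U) ∧
    Dense ((Subgroup.closure (⋃ H ∈ 𝓗, (H : Set G))) : Set G)

set_option linter.unusedSectionVars false
set_option linter.unusedVariables false

open MeasureTheory Set Filter Topology

/-- Hartman–Mycielski-style group: right-locally-constant finite-range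
functions on `[0,1)` with values in `G`, identity elsewhere. -/
structure HMS (G : Type u) [Group G] : Type u where
  toFun : ℝ → G
  rlc : ∀ t : ℝ, ∃ δ > (0:ℝ), ∀ s ∈ Set.Ico t (t + δ), toFun s = toFun t
  fin : (Set.range toFun).Finite
  outside : ∀ t : ℝ, t ∉ Set.Ico (0:ℝ) 1 → toFun t = 1

namespace HMS

variable {G : Type u} [Group G]

theorem ext' {f g : HMS G} (h : f.toFun = g.toFun) : f = g := by
  cases f; cases g; simpa using h

instance : One (HMS G) :=
  ⟨{ toFun := fun _ => 1
     rlc := fun t => ⟨1, one_pos, fun _ _ => rfl⟩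
     fin := (Set.finite_singleton 1).subset (by rintro x ⟨t, rfl⟩; rfl)
     outside := fun _ _ => rfl }⟩

@[simp] theorem one_toFun (t : ℝ) : (1 : HMS G).toFun t = 1 := rfl

instance : Mul (HMS G) :=
  ⟨fun f g =>
    { toFun := fun t => f.toFun t * g.toFun t
      rlc := fun t => by
        obtain ⟨δ₁, h₁, H₁⟩ := f.rlc t
        obtain ⟨δ₂, h₂, H₂⟩ := g.rlc t
        refine ⟨min δ₁ δ₂, lt_min h₁ h₂, fun s hs => ?_⟩
        rw [H₁ s ⟨hs.1, hs.2.trans_le (by gcongr; exact min_le_left _ _)⟩,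
          H₂ s ⟨hs.1, hs.2.trans_le (by gcongr; exact min_le_right _ _)⟩]
      fin := (f.fin.mul g.fin).subset (by
        rintro x ⟨t, rfl⟩; exact Set.mul_mem_mul ⟨t, rfl⟩ ⟨t, rfl⟩)
      outside := fun t ht => by rw [f.outside t ht, g.outside t ht, one_mul] }⟩

@[simp] theorem mul_toFun (f g : HMS G) (t : ℝ) :
    (f * g).toFun t = f.toFun t * g.toFun t := rfl

instance : Inv (HMS G) :=
  ⟨fun f =>
    { toFun := fun t => (f.toFun t)⁻¹
      rlc := fun t => by
        obtain ⟨δ, h, H⟩ := f.rlc t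
        exact ⟨δ, h, fun s hs => by rw [H s hs]⟩
      fin := f.fin.inv.subset (by
        rintro x ⟨t, rfl⟩; rw [Set.mem_inv]; exact ⟨t, by simp⟩)
      outside := fun t ht => by rw [f.outside t ht, inv_one] }⟩

@[simp] theorem inv_toFun (f : HMS G) (t : ℝ) :
    (f⁻¹).toFun t = (f.toFun t)⁻¹ := rfl

instance : Group (HMS G) :=
  { mul := (· * ·), one := 1, inv := (·⁻¹)
    mul_assoc := fun a b c => ext' (funext fun t => mul_assoc _ _ _)
    one_mul := fun a => ext' (funext fun t => one_mul _)
    mul_one := fun a => ext' (funext fun t => mul_one _)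
    inv_mul_cancel := fun a => ext' (funext fun t => inv_mul_cancel _) }

/-- Evaluation at a point, as a monoid hom. -/
def eval (t : ℝ) : HMS G →* G where
  toFun := fun f => f.toFun t
  map_one' := rfl
  map_mul' := fun _ _ => rfl

@[simp] theorem eval_apply (t : ℝ) (f : HMS G) : eval t f = f.toFun t := rfl

end HMS

namespace HMS

variable {G : Type u} [Group G] [TopologicalSpace G] [IsTopologicalGroup G]

/-- Basic neighborhood of the identity: functions that lie outside `U` only on
a set of (outer) measure less than `ε`. -/
def Nset (U : Set G) (ε : ℝ) : Set (HMS G) :=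
  {f | volume {t | f.toFun t ∉ U} < ENNReal.ofReal ε}

theorem Nset_mono {U V : Set G} {ε δ : ℝ} (hUV : U ⊆ V) (hεδ : ε ≤ δ) :
    (Nset U ε : Set (HMS G)) ⊆ Nset V δ := fun f hf =>
  lt_of_le_of_lt (measure_mono fun t => by
      simp only [Set.mem_setOf_eq]
      exact fun ht h => ht (hUV h))
    (lt_of_lt_of_le hf (ENNReal.ofReal_le_ofReal hεδ))

omit [TopologicalSpace G] [IsTopologicalGroup G] in
theorem one_mem_Nset {U : Set G} (hU : (1:G) ∈ U) {ε : ℝ} (hε : 0 < ε) :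
    (1 : HMS G) ∈ Nset U ε := by
  have : {t : ℝ | (1 : HMS G).toFun t ∉ U} = ∅ := by
    ext t; simp [hU]
  simp only [Nset, Set.mem_setOf_eq, this, measure_empty]
  exact ENNReal.ofReal_pos.mpr hε

variable (G) in
/-- The group filter basis defining the topology on `HMS G`. -/
def basis : GroupFilterBasis (HMS G) where
  sets := {V | ∃ U ∈ nhds (1:G), ∃ ε : ℝ, 0 < ε ∧ V = Nset U ε}
  nonempty := ⟨Nset univ 1, univ, univ_mem, 1, one_pos, rfl⟩
  inter_sets := by
    rintro _ _ ⟨U, hU, ε, hε, rfl⟩ ⟨V, hV, δ, hδ, rfl⟩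
    exact ⟨Nset (U ∩ V) (min ε δ), ⟨U ∩ V, inter_mem hU hV, _, lt_min hε hδ, rfl⟩,
      Set.subset_inter (Nset_mono Set.inter_subset_left (min_le_left _ _))
        (Nset_mono Set.inter_subset_right (min_le_right _ _))⟩
  one' := by
    rintro _ ⟨U, hU, ε, hε, rfl⟩
    exact one_mem_Nset (mem_of_mem_nhds hU) hε
  mul' := by
    rintro _ ⟨U, hU, ε, hε, rfl⟩
    obtain ⟨V, hV, hVU⟩ := exists_nhds_one_split hU
    refine ⟨Nset V (ε/2), ⟨V, hV, ε/2, half_pos hε, rfl⟩, ?_⟩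
    rintro x hx
    rw [Set.mem_mul] at hx
    obtain ⟨f, hf, g, hg, rfl⟩ := hx
    have hsub : {t | (f * g).toFun t ∉ U} ⊆
        {t | f.toFun t ∉ V} ∪ {t | g.toFun t ∉ V} := by
      intro t ht
      by_contra h
      simp only [Set.mem_union, Set.mem_setOf_eq, not_or] at h
      push_neg at h
      exact ht (hVU _ h.1 _ h.2)
    calc volume {t | (f * g).toFun t ∉ U}
        ≤ volume ({t | f.toFun t ∉ V} ∪ {t | g.toFun t ∉ V}) := measure_mono hsub
      _ ≤ volume {t | f.toFun t ∉ V} + volume {t | g.toFun t ∉ V} := measure_union_le _ _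
      _ < ENNReal.ofReal (ε/2) + ENNReal.ofReal (ε/2) := ENNReal.add_lt_add hf hg
      _ = ENNReal.ofReal ε := by
          rw [← ENNReal.ofReal_add (by linarith) (by linarith)]
          norm_num
  inv' := by
    rintro _ ⟨U, hU, ε, hε, rfl⟩
    refine ⟨Nset U⁻¹ ε, ⟨U⁻¹, inv_mem_nhds_one _ hU, ε, hε, rfl⟩, ?_⟩
    intro f hf
    refine lt_of_le_of_lt (measure_mono fun t ht => ?_) hf
    simp only [Set.mem_setOf_eq, inv_toFun] at ht ⊢
    intro h
    exact ht (Set.mem_inv.mp h)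
  conj' := by
    intro x₀
    rintro _ ⟨U, hU, ε, hε, rfl⟩
    set W : Set G := ⋂ g ∈ Set.range x₀.toFun, (fun h => g * h * g⁻¹) ⁻¹' U with hWdef
    have hW : W ∈ nhds (1:G) := by
      rw [Filter.biInter_mem x₀.fin]
      intro g _
      have hc : ContinuousAt (fun h => g * h * g⁻¹) (1:G) :=
        ((continuous_const.mul continuous_id).mul continuous_const).continuousAt
      refine hc.preimage_mem_nhds ?_
      simpa using hU
    refine ⟨Nset W ε, ⟨W, hW, ε, hε, rfl⟩, ?_⟩
    intro f hf
    refine lt_of_le_of_lt (measure_mono fun t ht => ?_) hf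
    simp only [Set.mem_setOf_eq, mul_toFun, inv_toFun] at ht ⊢
    intro h
    exact ht (Set.mem_iInter₂.mp h (x₀.toFun t) ⟨t, rfl⟩)

variable (G) in
instance : TopologicalSpace (HMS G) := (basis G).topology

instance : IsTopologicalGroup (HMS G) := GroupFilterBasis.isTopologicalGroup (basis G)

theorem mem_basis_iff {V : Set (HMS G)} :
    V ∈ basis G ↔ ∃ U ∈ nhds (1:G), ∃ ε : ℝ, 0 < ε ∧ V = Nset U ε := Iff.rfl

theorem nhds_one_hasBasis :
    (nhds (1 : HMS G)).HasBasis (fun V : Set (HMS G) => V ∈ basis G) id :=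
  (basis G).nhds_one_hasBasis

theorem nhds_hasBasis (f : HMS G) :
    (nhds f).HasBasis (fun V : Set (HMS G) => V ∈ basis G) fun V => (fun y => f * y) '' V :=
  (basis G).nhds_hasBasis f

end HMS
namespace HMS

variable {G : Type u} [Group G] [TopologicalSpace G] [IsTopologicalGroup G]

theorem volume_le_of_Ico_subset {a δ : ℝ} (hδ : 0 < δ) {S : Set ℝ}
    (h : Set.Ico a (a + δ) ⊆ S) : ENNReal.ofReal δ ≤ volume S := by
  calc ENNReal.ofReal δ = volume (Set.Ico a (a + δ)) := by
        rw [Real.volume_Ico]; congr 1; ring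
    _ ≤ volume S := measure_mono h

theorem t2 [T2Space G] : T2Space (HMS G) := by
  apply IsTopologicalGroup.t2Space_of_one_sep
  intro f hf
  have : ∃ t, f.toFun t ≠ 1 := by
    by_contra h
    push_neg at h
    exact hf (ext' (funext fun t => h t))
  obtain ⟨t, ht⟩ := this
  obtain ⟨δ, hδ, hH⟩ := f.rlc t
  refine ⟨Nset {f.toFun t}ᶜ δ, (basis G).mem_nhds_one
    ⟨{f.toFun t}ᶜ, ?_, δ, hδ, rfl⟩, ?_⟩
  · exact IsOpen.mem_nhds isOpen_compl_singleton (by simpa using ht.symm)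
  · intro hmem
    have hsub : Set.Ico t (t + δ) ⊆ {s | f.toFun s ∉ ({f.toFun t}ᶜ : Set G)} := by
      intro s hs
      simp [hH s hs]
    exact absurd hmem (not_lt.mpr (volume_le_of_Ico_subset hδ hsub))

variable (G) in
/-- The canonical embedding of `G` as constant functions. -/
noncomputable def emb : G →* HMS G where
  toFun := fun c =>
    { toFun := fun t => if t ∈ Set.Ico (0:ℝ) 1 then c else 1
      rlc := by
        intro t
        rcases lt_or_ge t 0 with h | h
        · refine ⟨-t, by linarith, fun s hs => ?_⟩
          have hs0 : s < 0 := by have := hs.2; simp at this; linarith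
          simp [hs0.not_ge, h.not_ge]
        · rcases lt_or_ge t 1 with h1 | h1
          · refine ⟨1 - t, by linarith, fun s hs => ?_⟩
            have : s ∈ Set.Ico (0:ℝ) 1 := ⟨le_trans h hs.1, by have := hs.2; linarith⟩
            simp [this, h, h1]
          · refine ⟨1, one_pos, fun s hs => ?_⟩
            have hs1 : (1:ℝ) ≤ s := le_trans h1 hs.1
            simp [hs1.not_gt, h1.not_gt]
      fin := ((Set.finite_singleton 1).insert c).subset (by
        rintro x ⟨t, rfl⟩
        by_cases h : t ∈ Set.Ico (0:ℝ) 1 <;> simp [h])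
      outside := fun t ht => if_neg ht }
  map_one' := ext' (funext fun t => by dsimp only; split <;> rfl)
  map_mul' := fun c c' => ext' (funext fun t => by
    dsimp only [mul_toFun]; split <;> simp)

theorem emb_toFun (c : G) (t : ℝ) :
    (emb G c).toFun t = if t ∈ Set.Ico (0:ℝ) 1 then c else 1 := rfl

theorem emb_injective : Function.Injective (emb G) := by
  intro c c' h
  have := congrFun (congrArg HMS.toFun h) 0
  simpa [emb_toFun, Set.left_mem_Ico] using this

theorem comap_emb_nhds_one : Filter.comap (emb G) (nhds (1 : HMS G)) = nhds (1 : G) := by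
  apply le_antisymm
  · -- 𝓝 1 ≤ comap : preimages of basis sets pull back into U
    intro S hS
    rw [Filter.mem_comap]
    refine ⟨Nset S 1, (basis G).mem_nhds_one ⟨S, hS, 1, one_pos, rfl⟩, ?_⟩
    intro c hc
    simp only [Set.mem_preimage, Nset, Set.mem_setOf_eq] at hc
    by_contra hcS
    have hsub : Set.Ico (0:ℝ) (0 + 1) ⊆ {t | (emb G c).toFun t ∉ S} := by
      intro t htI
      have htI' : t ∈ Set.Ico (0:ℝ) 1 := by simpa using htI
      simp [emb_toFun, htI'.1, htI'.2, hcS]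
    exact absurd hc (not_lt.mpr (volume_le_of_Ico_subset one_pos hsub))
  · -- comap ≤ 𝓝 1 : every S in comap is a neighborhood
    intro S hS
    rw [Filter.mem_comap] at hS
    obtain ⟨V, hV, hVS⟩ := hS
    obtain ⟨W, hW, hWV⟩ := (nhds_one_hasBasis).mem_iff.mp hV
    obtain ⟨U, hU, ε, hε, rfl⟩ := hW
    have hUsub : U ⊆ (emb G) ⁻¹' (Nset U ε) := by
      intro c hc
      have : {t : ℝ | (emb G c).toFun t ∉ U} = ∅ := by
        ext t
        simp only [Set.mem_setOf_eq, Set.mem_empty_iff_false, iff_false, not_not, emb_toFun]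
        split
        · exact hc
        · exact mem_of_mem_nhds hU
      simp only [Set.mem_preimage, Nset, Set.mem_setOf_eq, this, measure_empty]
      exact ENNReal.ofReal_pos.mpr hε
    exact mem_of_superset hU (hUsub.trans ((Set.preimage_mono hWV).trans hVS))
end HMS
namespace HMS

variable {G : Type u} [Group G] [TopologicalSpace G] [IsTopologicalGroup G]

theorem emb_isInducing : Topology.IsInducing ⇑(emb G) := by
  rw [Topology.isInducing_iff_nhds]
  intro c
  have h1 : nhds c = Filter.comap (fun g => g * c⁻¹) (nhds (1:G)) :=
    (nhds_translation_mul_inv c).symm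
  have h2 : nhds (emb G c) = Filter.comap (fun g => g * (emb G c)⁻¹) (nhds (1:HMS G)) :=
    (nhds_translation_mul_inv _).symm
  rw [h2, Filter.comap_comap, h1, ← comap_emb_nhds_one, Filter.comap_comap]
  congr 1
  funext g
  simp [Function.comp]

theorem compl_range_emb_mem_nhds [T2Space G] (f : HMS G) (t₁ t₂ : ℝ)
    (ht₁ : t₁ ∈ Set.Ico (0:ℝ) 1) (ht₂ : t₂ ∈ Set.Ico (0:ℝ) 1) (hlt : t₁ < t₂)
    (hne : f.toFun t₁ ≠ f.toFun t₂) :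
    (Set.range ⇑(emb G))ᶜ ∈ nhds f := by
  obtain ⟨δ₁, hδ₁, H₁⟩ := f.rlc t₁
  obtain ⟨δ₂, hδ₂, H₂⟩ := f.rlc t₂
  set δ : ℝ := min (min δ₁ δ₂) (min (t₂ - t₁) (1 - t₂)) with hδdef
  have hδ : 0 < δ :=
    lt_min (lt_min hδ₁ hδ₂) (lt_min (by linarith) (by linarith [ht₂.2]))
  have hδa : δ ≤ δ₁ := le_trans (min_le_left _ _) (min_le_left _ _)
  have hδb : δ ≤ δ₂ := le_trans (min_le_left _ _) (min_le_right _ _)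
  have hδc : δ ≤ t₂ - t₁ := le_trans (min_le_right _ _) (min_le_left _ _)
  have hδd : δ ≤ 1 - t₂ := le_trans (min_le_right _ _) (min_le_right _ _)
  obtain ⟨A, B, hA, hB, haA, hbB, hAB⟩ := t2_separation hne
  set U : Set G := (fun x => f.toFun t₁ * x) ⁻¹' A ∩ (fun x => f.toFun t₂ * x) ⁻¹' B with hUdef
  have hU : U ∈ nhds (1:G) := by
    refine Filter.inter_mem ?_ ?_
    · exact (continuous_const.mul continuous_id).continuousAt.preimage_mem_nhds
        (by simpa using hA.mem_nhds haA)
    · exact (continuous_const.mul continuous_id).continuousAt.preimage_mem_nhds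
        (by simpa using hB.mem_nhds hbB)
  refine (nhds_hasBasis f).mem_iff.mpr ⟨Nset U δ, ⟨U, hU, δ, hδ, rfl⟩, ?_⟩
  rintro x ⟨h, hh, rfl⟩
  simp only [Set.mem_compl_iff]
  rintro ⟨c, hc⟩
  have find : ∀ a : ℝ, ∃ s ∈ Set.Ico a (a + δ), h.toFun s ∈ U := by
    intro a
    by_contra hcon
    push_neg at hcon
    have hsub : Set.Ico a (a + δ) ⊆ {t | h.toFun t ∉ U} := fun s hs => hcon s hs
    exact absurd hh (not_lt.mpr (volume_le_of_Ico_subset hδ hsub))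
  obtain ⟨s₁, hs₁I, hs₁U⟩ := find t₁
  obtain ⟨s₂, hs₂I, hs₂U⟩ := find t₂
  have e₁ : (f * h).toFun s₁ ∈ A := by
    rw [mul_toFun, H₁ s₁ ⟨hs₁I.1, lt_of_lt_of_le hs₁I.2 (by linarith)⟩]
    exact hs₁U.1
  have e₂ : (f * h).toFun s₂ ∈ B := by
    rw [mul_toFun, H₂ s₂ ⟨hs₂I.1, lt_of_lt_of_le hs₂I.2 (by linarith)⟩]
    exact hs₂U.2
  have hs₁01 : s₁ ∈ Set.Ico (0:ℝ) 1 :=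
    ⟨le_trans ht₁.1 hs₁I.1, by have := hs₁I.2; have := ht₂.2; linarith⟩
  have hs₂01 : s₂ ∈ Set.Ico (0:ℝ) 1 :=
    ⟨le_trans ht₂.1 hs₂I.1, by have := hs₂I.2; linarith⟩
  have hc₁ : c ∈ A := by
    have := congrFun (congrArg HMS.toFun hc) s₁
    rw [emb_toFun, if_pos hs₁01] at this
    rw [this]; exact e₁
  have hc₂ : c ∈ B := by
    have := congrFun (congrArg HMS.toFun hc) s₂
    rw [emb_toFun, if_pos hs₂01] at this
    rw [this]; exact e₂
  exact Set.disjoint_left.mp hAB hc₁ hc₂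

theorem isClosed_range_emb [T2Space G] : IsClosed (Set.range ⇑(emb G)) := by
  rw [← isOpen_compl_iff, isOpen_iff_mem_nhds]
  intro f hf
  have hnc : ∃ t₁ ∈ Set.Ico (0:ℝ) 1, ∃ t₂ ∈ Set.Ico (0:ℝ) 1, f.toFun t₁ ≠ f.toFun t₂ := by
    by_contra h
    push_neg at h
    apply hf
    refine ⟨f.toFun 0, ?_⟩
    apply ext'; funext t
    rw [emb_toFun]
    split
    · exact h 0 ⟨le_refl 0, one_pos⟩ t ‹_›
    · exact (f.outside t ‹_›).symm
  obtain ⟨t₁, ht₁, t₂, ht₂, hne⟩ := hnc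
  rcases lt_or_gt_of_ne (show t₁ ≠ t₂ from fun h => hne (by rw [h])) with hlt | hgt
  · exact compl_range_emb_mem_nhds f t₁ t₂ ht₁ ht₂ hlt hne
  · exact compl_range_emb_mem_nhds f t₂ t₁ ht₂ ht₁ hgt hne.symm

end HMS
namespace HMS

variable {G : Type u} [Group G] [TopologicalSpace G] [IsTopologicalGroup G]

omit [TopologicalSpace G] [IsTopologicalGroup G] in
/-- Restriction of `f` to the interval `[a, b)`, identity elsewhere. -/
noncomputable def res (f : HMS G) (a b : ℝ) : HMS G where
  toFun := fun t => if t ∈ Set.Ico a b then f.toFun t else 1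
  rlc := by
    intro t
    rcases lt_or_ge t a with h | h
    · refine ⟨a - t, by linarith, fun s hs => ?_⟩
      have hsa : s < a := by have := hs.2; linarith
      rw [if_neg (fun hm => absurd hm.1 (not_le.mpr hsa)),
        if_neg (fun hm => absurd hm.1 (not_le.mpr h))]
    · rcases lt_or_ge t b with h1 | h1
      · obtain ⟨δ₀, hδ₀, H⟩ := f.rlc t
        refine ⟨min δ₀ (b - t), lt_min hδ₀ (by linarith), fun s hs => ?_⟩
        have hmr : min δ₀ (b - t) ≤ b - t := min_le_right _ _
        have hs' : s ∈ Set.Ico a b := ⟨le_trans h hs.1, by have := hs.2; linarith⟩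
        have ht' : t ∈ Set.Ico a b := ⟨h, h1⟩
        rw [if_pos hs', if_pos ht',
          H s ⟨hs.1, lt_of_lt_of_le hs.2 (by gcongr; exact min_le_left _ _)⟩]
      · refine ⟨1, one_pos, fun s hs => ?_⟩
        have hbs : b ≤ s := le_trans h1 hs.1
        rw [if_neg (fun hm => absurd hm.2 (not_lt.mpr hbs)),
          if_neg (fun hm => absurd hm.2 (not_lt.mpr h1))]
  fin := (f.fin.insert 1).subset (by
    rintro x ⟨t, rfl⟩
    dsimp only
    split
    · exact Set.mem_insert_of_mem _ ⟨t, rfl⟩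
    · exact Set.mem_insert _ _)
  outside := fun t ht => by
    split
    · exact f.outside t ht
    · rfl

omit [TopologicalSpace G] [IsTopologicalGroup G] in
theorem res_toFun (f : HMS G) (a b t : ℝ) :
    (f.res a b).toFun t = if t ∈ Set.Ico a b then f.toFun t else 1 := rfl

omit [TopologicalSpace G] [IsTopologicalGroup G] in
theorem res_zero (f : HMS G) : f.res 0 0 = 1 :=
  ext' (funext fun t => by rw [res_toFun]; simp)

omit [TopologicalSpace G] [IsTopologicalGroup G] in
theorem res_one (f : HMS G) : f.res 0 1 = f :=
  ext' (funext fun t => by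
    rw [res_toFun]
    split
    · rfl
    · exact (f.outside t ‹_›).symm)

theorem joined_one (f : HMS G) : Joined (1 : HMS G) f := by
  have cont : Continuous fun s : unitInterval => f.res 0 s.1 := by
    rw [continuous_iff_continuousAt]
    intro s₀
    rw [ContinuousAt, (nhds_hasBasis (f.res 0 s₀.1)).tendsto_right_iff]
    rintro V ⟨U, hU, ε, hε, rfl⟩
    have hball : ∀ᶠ s : unitInterval in nhds s₀, dist s s₀ < ε := by
      filter_upwards [Metric.ball_mem_nhds s₀ hε] with s hs
      exact Metric.mem_ball.mp hs
    filter_upwards [hball] with s hs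
    refine ⟨(f.res 0 s₀.1)⁻¹ * f.res 0 s.1, ?_, by dsimp only; rw [mul_inv_cancel_left]⟩
    have hsub : {t | ((f.res 0 s₀.1)⁻¹ * f.res 0 s.1).toFun t ∉ U} ⊆
        Set.Ico (min s.1 s₀.1) (max s.1 s₀.1) := by
      intro t ht
      simp only [Set.mem_setOf_eq, mul_toFun, inv_toFun, res_toFun] at ht
      by_contra htI
      apply ht
      have heq : (if t ∈ Set.Ico (0:ℝ) s₀.1 then f.toFun t else 1)
          = (if t ∈ Set.Ico (0:ℝ) s.1 then f.toFun t else 1) := by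
        rcases lt_or_ge t (min s.1 s₀.1) with hmin | hge
        · by_cases h0 : (0:ℝ) ≤ t
          · rw [if_pos ⟨h0, lt_of_lt_of_le hmin (min_le_right _ _)⟩,
              if_pos ⟨h0, lt_of_lt_of_le hmin (min_le_left _ _)⟩]
          · rw [if_neg (fun hm => h0 hm.1), if_neg (fun hm => h0 hm.1)]
        · have hmax : max s.1 s₀.1 ≤ t :=
            le_of_not_gt fun hltm => htI ⟨hge, hltm⟩
          rw [if_neg (fun hm => absurd hm.2
              (not_lt.mpr (le_trans (le_max_right _ _) hmax))),
            if_neg (fun hm => absurd hm.2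
              (not_lt.mpr (le_trans (le_max_left _ _) hmax)))]
      rw [heq, inv_mul_cancel]
      exact mem_of_mem_nhds hU
    refine lt_of_le_of_lt (measure_mono hsub) ?_
    rw [Real.volume_Ico, max_sub_min_eq_abs]
    refine (ENNReal.ofReal_lt_ofReal_iff hε).mpr ?_
    rw [← Real.dist_eq, ← Subtype.dist_eq]
    rwa [dist_comm]
  refine ⟨⟨⟨fun s => f.res 0 s.1, cont⟩, ?_, ?_⟩⟩
  · show f.res 0 ((0:unitInterval):ℝ) = 1
    rw [show ((0:unitInterval):ℝ) = 0 from rfl, f.res_zero]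
  · show f.res 0 ((1:unitInterval):ℝ) = f
    rw [show ((1:unitInterval):ℝ) = 1 from rfl, f.res_one]

theorem pathConnectedSpace : PathConnectedSpace (HMS G) :=
  ⟨⟨1⟩, fun x y => (joined_one x).symm.trans (joined_one y)⟩

end HMS
theorem list_range_prod_eq_single {M : Type v} [Monoid M] (g : ℕ → M) :
    ∀ (N : ℕ) (k₀ : ℕ), k₀ < N → (∀ k, k ≠ k₀ → g k = 1) →
      ((List.range N).map g).prod = g k₀ := by
  intro N
  induction N with
  | zero => intro k₀ hk; omega
  | succ N ih =>
    intro k₀ hk h1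
    rw [List.range_succ, List.map_append, List.prod_append]
    simp only [List.map_cons, List.map_nil, List.prod_cons, List.prod_nil, mul_one]
    rcases eq_or_lt_of_le (Nat.lt_succ_iff.mp hk) with heq | hlt
    · have hone : ((List.range N).map g).prod = 1 := by
        apply List.prod_eq_one
        intro x hx
        obtain ⟨k, hkmem, rfl⟩ := List.mem_map.mp hx
        exact h1 k (by have := List.mem_range.mp hkmem; omega)
      rw [hone, one_mul, ← heq]
    · rw [ih k₀ hlt h1, h1 N (by omega), mul_one]

namespace HMS

variable {G : Type u} [Group G] [TopologicalSpace G] [IsTopologicalGroup G]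

theorem hasSSGP : HasSSGP (HMS G) := by
  intro W hW
  obtain ⟨V, hVmem, hVW⟩ := nhds_one_hasBasis.mem_iff.mp hW
  obtain ⟨U, hU, ε, hε, rfl⟩ := hVmem
  obtain ⟨n, hn⟩ := exists_nat_one_div_lt hε
  set ℓ : ℝ := 1 / ((n:ℝ) + 1) with hℓdef
  have hℓpos : 0 < ℓ := by positivity
  have hℓ1 : ((n:ℝ) + 1) * ℓ = 1 := by rw [hℓdef]; field_simp
  set Hs : ℝ → Subgroup (HMS G) := fun a =>
    { carrier := {f : HMS G | ∀ t, t ∉ Set.Ico a (a + ℓ) → f.toFun t = 1}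
      one_mem' := fun _ _ => rfl
      mul_mem' := fun {f g} hf hg t ht => by
        rw [mul_toFun, hf t ht, hg t ht, one_mul]
      inv_mem' := fun {f} hf t ht => by rw [inv_toFun, hf t ht, inv_one] } with hHsdef
  have mem_Hs : ∀ (a : ℝ) (f : HMS G),
      f ∈ Hs a ↔ ∀ t, t ∉ Set.Ico a (a + ℓ) → f.toFun t = 1 := fun a f => Iff.rfl
  refine ⟨Set.range Hs, ?_, ?_⟩
  · rintro H ⟨a, rfl⟩ f hf
    apply hVW
    show f ∈ Nset U ε
    rw [SetLike.mem_coe, mem_Hs] at hf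
    have hsub : {t | f.toFun t ∉ U} ⊆ Set.Ico a (a + ℓ) := by
      intro t ht
      by_contra htI
      exact ht (by rw [hf t htI]; exact mem_of_mem_nhds hU)
    calc volume {t | f.toFun t ∉ U} ≤ volume (Set.Ico a (a + ℓ)) := measure_mono hsub
      _ = ENNReal.ofReal ℓ := by rw [Real.volume_Ico]; congr 1; ring
      _ < ENNReal.ofReal ε := (ENNReal.ofReal_lt_ofReal_iff hε).mpr hn
  · have key : ∀ f : HMS G,
        f = ((List.range (n+1)).map fun k : ℕ => f.res ((k:ℝ)*ℓ) ((k:ℝ)*ℓ+ℓ)).prod := by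
      intro f
      apply ext'; funext t
      set g : ℕ → HMS G := fun k : ℕ => f.res ((k:ℝ)*ℓ) ((k:ℝ)*ℓ+ℓ) with hgdef
      have hev : (((List.range (n+1)).map g).prod).toFun t
          = ((List.range (n+1)).map fun k => (g k).toFun t).prod := by
        have := map_list_prod (eval t) ((List.range (n+1)).map g)
        simpa [List.map_map, Function.comp_def] using this
      rw [hev]
      by_cases ht : t ∈ Set.Ico (0:ℝ) 1
      · set k₀ : ℕ := (⌊t / ℓ⌋).toNat with hk₀def
        have hfl : ((k₀:ℤ):ℝ) = ((⌊t / ℓ⌋ : ℤ) : ℝ) := by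
          rw [hk₀def, Int.toNat_of_nonneg (Int.floor_nonneg.mpr (div_nonneg ht.1 hℓpos.le))]
        have hfl' : (k₀:ℝ) = ((⌊t / ℓ⌋ : ℤ) : ℝ) := by push_cast at hfl ⊢; exact hfl
        have hlow : (k₀:ℝ) * ℓ ≤ t := by
          rw [hfl']
          have h1 := Int.floor_le (t / ℓ)
          calc ((⌊t / ℓ⌋ : ℤ) : ℝ) * ℓ ≤ (t / ℓ) * ℓ := by gcongr
            _ = t := by field_simp
        have hhigh : t < (k₀:ℝ) * ℓ + ℓ := by
          rw [hfl']
          have h1 := Int.lt_floor_add_one (t / ℓ)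
          have h2 : t / ℓ * ℓ < (((⌊t / ℓ⌋ : ℤ) : ℝ) + 1) * ℓ := by gcongr
          rw [div_mul_cancel₀ _ hℓpos.ne'] at h2
          linarith [h2]
        have hk₀n : k₀ < n + 1 := by
          by_contra hcon
          push_neg at hcon
          have h4 : ((n:ℝ) + 1) ≤ (k₀:ℝ) := by exact_mod_cast hcon
          have h5 : ((n:ℝ) + 1) * ℓ ≤ (k₀:ℝ) * ℓ := by gcongr
          rw [hℓ1] at h5
          have := ht.2
          linarith
        rw [list_range_prod_eq_single (fun k => (g k).toFun t) (n+1) k₀ hk₀n ?_]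
        · show f.toFun t = (g k₀).toFun t
          rw [hgdef]
          dsimp only
          rw [res_toFun, if_pos ⟨hlow, hhigh⟩]
        · intro b hb
          show (g b).toFun t = 1
          rw [hgdef]
          dsimp only
          rw [res_toFun, if_neg]
          intro hbI
          rcases lt_or_gt_of_ne hb with hblt | hbgt
          · have h6 : (b:ℝ) + 1 ≤ (k₀:ℝ) := by exact_mod_cast hblt
            have h7 : ((b:ℝ) + 1) * ℓ ≤ (k₀:ℝ) * ℓ := by gcongr
            have h3 := hbI.2
            nlinarith
          · have h6 : (k₀:ℝ) + 1 ≤ (b:ℝ) := by exact_mod_cast hbgt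
            have h7 : ((k₀:ℝ) + 1) * ℓ ≤ (b:ℝ) * ℓ := by gcongr
            have h3 := hbI.1
            nlinarith
      · rw [f.outside t ht]
        symm
        apply List.prod_eq_one
        intro x hx
        obtain ⟨k, hkmem, rfl⟩ := List.mem_map.mp hx
        show (g k).toFun t = 1
        rw [hgdef]
        dsimp only
        rw [res_toFun]
        split
        · exact f.outside t ht
        · rfl
    have htop : Subgroup.closure (⋃ H ∈ Set.range Hs, (H : Set (HMS G))) = ⊤ := by
      rw [Subgroup.eq_top_iff']
      intro f
      rw [key f]
      apply Subgroup.list_prod_mem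
      intro x hx
      obtain ⟨k, hkmem, rfl⟩ := List.mem_map.mp hx
      apply Subgroup.subset_closure
      refine Set.mem_biUnion ⟨(k:ℝ)*ℓ, rfl⟩ ?_
      rw [SetLike.mem_coe, mem_Hs]
      intro t htI
      rw [res_toFun, if_neg htI]
    rw [htop, Subgroup.coe_top]
    exact dense_univ

end HMS

/-- Every Hausdorff topological group embeds as a closed subgroup of a path
connected Hausdorff topological group with the SSGP property. -/
theorem exists_closed_embedding_pathConnected_ssgp (G : Type u) [Group G] [TopologicalSpace G]
    [IsTopologicalGroup G] [T2Space G] :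
    ∃ (Gstar : Type u) (gG : Group Gstar) (tG : TopologicalSpace Gstar),
      haveI := gG
      haveI := tG
      ∃ (_ : IsTopologicalGroup Gstar) (_ : T2Space Gstar) (e : G →* Gstar),
        Topology.IsEmbedding (⇑e) ∧ IsClosed (Set.range e) ∧ PathConnectedSpace Gstar ∧ HasSSGP Gstar := by
  exact ⟨HMS G, inferInstance, inferInstance, inferInstance, HMS.t2, HMS.emb G,
    ⟨HMS.emb_isInducing, HMS.emb_injective⟩, HMS.isClosed_range_emb,
    HMS.pathConnectedSpace, HMS.hasSSGP⟩
end

section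
/- Let G be a (possibly nonabelian) Hausdorff topological group which is torsion of bounded order (i.e., there is an integer M ≥ 1 such that x^M = 1_G for every x ∈ G) and which has no proper open subgroup. Then G has the small subgroup generating property (SSGP). -/
universe u v

/-- A (possibly nonabelian) Hausdorff topological group which is torsion of
bounded order and has no proper open subgroup has the SSGP property. -/
theorem hasSSGP_of_boundedTorsion_no_proper_open_subgroup (G : Type u) [Group G]
    [TopologicalSpace G] [IsTopologicalGroup G] [T2Space G]
    (M : ℕ) (hM : 1 ≤ M) (htor : ∀ x : G, x ^ M = 1)
    (hopen : ∀ H : Subgroup G, IsOpen (H : Set G) → H = ⊤) :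
    HasSSGP G := by
  intro U hU
  -- V : nhd of 1 such that all powers x^k, k < M, lie in U
  set V : Set G := ⋂ k ∈ Finset.range M, (fun x : G => x ^ k) ⁻¹' U with hV
  have hVnhds : V ∈ nhds (1 : G) := by
    refine (Filter.biInter_finset_mem _).2 fun k _ => ?_
    have hc : Continuous fun x : G => x ^ k := continuous_pow k
    have : (fun x : G => x ^ k) 1 = 1 := one_pow k
    exact hc.continuousAt.preimage_mem_nhds (by simpa [this] using hU)
  have hpow : ∀ x ∈ V, ∀ k < M, x ^ k ∈ U := by
    intro x hx k hk
    have := Set.mem_iInter₂.1 hx k (Finset.mem_range.2 hk)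
    exact this
  refine ⟨{H | ∃ x ∈ V, H = Subgroup.zpowers x}, ?_, ?_⟩
  · rintro H ⟨x, hx, rfl⟩
    rintro y hy
    obtain ⟨n, rfl⟩ := Subgroup.mem_zpowers_iff.1 hy
    have hM0 : (0 : ℤ) < (M : ℤ) := by exact_mod_cast hM
    have hxM : x ^ (M : ℤ) = 1 := by exact_mod_cast htor x
    have key : x ^ n = x ^ (n % (M : ℤ)) := by
      conv_lhs => rw [← Int.emod_add_mul_ediv n (M : ℤ)]
      rw [zpow_add, zpow_mul, hxM, one_zpow, mul_one]
    have hr0 : 0 ≤ n % (M : ℤ) := Int.emod_nonneg n (by omega)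
    have hrM : n % (M : ℤ) < (M : ℤ) := Int.emod_lt_of_pos n hM0
    set r := (n % (M : ℤ)).toNat with hrdef
    have hrcast : ((r : ℤ)) = n % (M : ℤ) := Int.toNat_of_nonneg hr0
    have : x ^ n = x ^ r := by rw [key, ← hrcast, zpow_natCast]
    rw [this]
    exact hpow x hx r (by omega)
  · have hsub : V ⊆ ⋃ H ∈ {H : Subgroup G | ∃ x ∈ V, H = Subgroup.zpowers x}, (H : Set G) := by
      intro x hx
      exact Set.mem_biUnion ⟨x, hx, rfl⟩ (Subgroup.mem_zpowers x)
    set K := Subgroup.closure (⋃ H ∈ {H : Subgroup G | ∃ x ∈ V, H = Subgroup.zpowers x}, (H : Set G))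
    have hVK : V ⊆ (K : Set G) := fun x hx => Subgroup.subset_closure (hsub hx)
    have hKopen : IsOpen (K : Set G) := by
      apply Subgroup.isOpen_of_mem_nhds (g := (1 : G))
      exact Filter.mem_of_superset hVnhds hVK
    have : K = ⊤ := hopen K hKopen
    rw [this]
    simp [dense_iff_closure_eq]
end

section
/- Let G be a (possibly nonabelian) connected Hausdorff topological group which is torsion of bounded order (i.e., there is an integer M ≥ 1 such that x^M = 1_G for every x ∈ G). Then G has the small subgroup generating property (SSGP). -/
open scoped Pointwise

universe u v

/-- For every `n` and every neighborhood `U` of `1` there is a neighborhood `V`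
of `1` with `V ^ j ⊆ U` for all `j ≤ n`. -/
lemma exists_nhds_pow_subset {G : Type u} [Group G] [TopologicalSpace G]
    [IsTopologicalGroup G] (n : ℕ) {U : Set G} (hU : U ∈ nhds 1) :
    ∃ V ∈ nhds (1 : G), ∀ j ≤ n, V ^ j ⊆ U := by
  induction n generalizing U with
  | zero =>
      refine ⟨U, hU, ?_⟩
      intro j hj
      interval_cases j
      simpa using mem_of_mem_nhds hU
  | succ n ih =>
      obtain ⟨W, hWopen, hW1, hWW⟩ := exists_open_nhds_one_mul_subset hU
      have hWnhds : W ∈ nhds (1 : G) := hWopen.mem_nhds hW1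
      obtain ⟨V, hVnhds, hV⟩ := ih hWnhds
      refine ⟨V ∩ W, Filter.inter_mem hVnhds hWnhds, ?_⟩
      intro j hj
      rcases Nat.lt_or_ge j (n + 1) with h | h
      · have : (V ∩ W) ^ j ⊆ V ^ j := Set.pow_subset_pow_left Set.inter_subset_left
        refine this.trans ((hV j (Nat.lt_succ_iff.mp h)).trans ?_)
        intro w hw
        have : w * 1 ∈ W * W := Set.mul_mem_mul hw hW1
        simpa using hWW this
      · have hj' : j = n + 1 := le_antisymm hj h
        subst hj'
        rw [pow_succ]
        have h1 : (V ∩ W) ^ n ⊆ W :=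
          (Set.pow_subset_pow_left Set.inter_subset_left).trans (hV n le_rfl)
        calc (V ∩ W) ^ n * (V ∩ W) ⊆ W * W :=
              Set.mul_subset_mul h1 Set.inter_subset_right
          _ ⊆ U := hWW

/-- A (possibly nonabelian) connected Hausdorff topological group which is
torsion of bounded order has the SSGP property. -/
theorem hasSSGP_of_boundedTorsion_connected (G : Type u) [Group G]
    [TopologicalSpace G] [IsTopologicalGroup G] [T2Space G] [ConnectedSpace G]
    (M : ℕ) (hM : 1 ≤ M) (htor : ∀ x : G, x ^ M = 1) :
    HasSSGP G := by
  intro U hU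
  obtain ⟨V, hVnhds, hVpow⟩ := exists_nhds_pow_subset M hU
  refine ⟨(fun x : G => Subgroup.zpowers x) '' V, ?_, ?_⟩
  · rintro H ⟨x, hxV, rfl⟩ y hy
    obtain ⟨k, rfl⟩ := hy
    have hM0 : (0 : ℤ) < (M : ℤ) := by exact_mod_cast hM
    have hk : x ^ k = x ^ (k % (M : ℤ)).toNat := by
      have h1 : x ^ ((M : ℤ) * (k / (M : ℤ))) = 1 := by
        rw [zpow_mul, zpow_natCast, htor x, one_zpow]
      calc x ^ k = x ^ ((M : ℤ) * (k / (M : ℤ)) + k % (M : ℤ)) := by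
            rw [Int.mul_ediv_add_emod]
        _ = x ^ ((M : ℤ) * (k / (M : ℤ))) * x ^ (k % (M : ℤ)) := zpow_add x _ _
        _ = x ^ (k % (M : ℤ)) := by rw [h1, one_mul]
        _ = x ^ (k % (M : ℤ)).toNat := by
            rw [← zpow_natCast, Int.toNat_of_nonneg (Int.emod_nonneg k hM0.ne')]
    show x ^ k ∈ U
    rw [hk]
    have hr : (k % (M : ℤ)).toNat ≤ M := by
      have := Int.emod_lt_of_pos k hM0
      omega
    exact hVpow _ hr (Set.pow_mem_pow hxV)
  · have hsub : V ⊆ ⋃ H ∈ (fun x : G => Subgroup.zpowers x) '' V, (H : Set G) := by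
      intro x hx
      refine Set.mem_biUnion ⟨x, hx, rfl⟩ ?_
      exact Subgroup.mem_zpowers x
    set K := Subgroup.closure (⋃ H ∈ (fun x : G => Subgroup.zpowers x) '' V, (H : Set G))
    have hVK : V ⊆ (K : Set G) := hsub.trans Subgroup.subset_closure
    have hKopen : IsOpen (K : Set G) :=
      K.isOpen_of_mem_nhds (Filter.mem_of_superset hVnhds hVK)
    have hKclosed : IsClosed (K : Set G) := K.isClosed_of_isOpen hKopen
    have : (K : Set G) = Set.univ :=
      (IsClopen.eq_univ ⟨hKclosed, hKopen⟩ ⟨1, K.one_mem⟩)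
    rw [this]
    exact dense_univ
end

section
/- Let (p_i)_{i<ω} be a strictly increasing sequence of prime numbers. Then the direct sum G = ⊕_{i<ω} ℤ/p_iℤ admits an SSGP topology; that is, there is a Hausdorff group topology 𝒯 on G such that (G,𝒯) has the small subgroup generating property (SSGP). -/
universe u v

/-- The small subgroup generating property, additive version: for every
neighborhood `U` of `0` there is a family `𝓗` of subgroups of `G`, each
contained in `U`, such that the subgroup generated by `⋃ 𝓗` is dense in `G`. -/
def AddHasSSGP (G : Type u) [AddGroup G] [TopologicalSpace G] : Prop :=
  ∀ U ∈ nhds (0 : G), ∃ 𝓗 : Set (AddSubgroup G),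
    (∀ H ∈ 𝓗, (H : Set G) ⊆ U) ∧
    Dense ((AddSubgroup.closure (⋃ H ∈ 𝓗, (H : Set G))) : Set G)

open scoped DirectSum

namespace SSGPAux

open MeasureTheory Set

noncomputable section

/-! ### Dyadic bookkeeping -/

def lev (n : ℕ) : ℕ := Nat.log 2 (n + 1)

def pos (n : ℕ) : ℕ := n + 1 - 2 ^ lev n

def idx (m k : ℕ) : ℕ := 2 ^ m + k - 1

lemma idx_add_one (m k : ℕ) : idx m k + 1 = 2 ^ m + k := by
  have : 1 ≤ 2 ^ m := Nat.one_le_two_pow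
  unfold idx; omega

lemma lev_idx {m k : ℕ} (hk : k < 2 ^ m) : lev (idx m k) = m := by
  unfold lev
  rw [idx_add_one]
  refine Nat.log_eq_of_pow_le_of_lt_pow (Nat.le_add_right _ _) ?_
  rw [pow_succ]; omega

lemma pos_idx {m k : ℕ} (hk : k < 2 ^ m) : pos (idx m k) = k := by
  unfold pos
  rw [idx_add_one, lev_idx hk]; omega

lemma pow_lev_le (n : ℕ) : 2 ^ lev n ≤ n + 1 :=
  Nat.pow_log_le_self 2 (Nat.succ_ne_zero n)

lemma lt_pow_lev (n : ℕ) : n + 1 < 2 ^ (lev n + 1) :=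
  Nat.lt_pow_succ_log_self one_lt_two _

lemma pos_lt (n : ℕ) : pos n < 2 ^ lev n := by
  have h1 := pow_lev_le n
  have h2 := lt_pow_lev n
  rw [pow_succ] at h2
  unfold pos; omega

lemma pow_add_pos (n : ℕ) : 2 ^ lev n + pos n = n + 1 := by
  have h1 := pow_lev_le n
  unfold pos; omega

lemma idx_ge (m k : ℕ) : 2 ^ m ≤ idx m k + 1 := by rw [idx_add_one]; omega

/-! ### Dyadic intervals -/

/-- The dyadic interval `[k/2^m, (k+1)/2^m)`. -/
def Jmk (m k : ℕ) : Set ℝ := Ico ((k : ℝ) / 2 ^ m) ((k + 1 : ℕ) / 2 ^ m)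

lemma Jmk_endpoints (m k : ℕ) : ((k + 1 : ℕ) : ℝ) / 2 ^ m = (k : ℝ) / 2 ^ m + (2 ^ m)⁻¹ := by
  push_cast; ring

lemma measurableSet_Jmk (m k : ℕ) : MeasurableSet (Jmk m k) := measurableSet_Ico

lemma volume_Jmk (m k : ℕ) : volume (Jmk m k) = ENNReal.ofReal ((2 ^ m)⁻¹) := by
  rw [Jmk, Real.volume_Ico, Jmk_endpoints]; ring_nf

lemma volume_Jmk_ne_top (m k : ℕ) : volume (Jmk m k) ≠ ⊤ := by
  rw [volume_Jmk]; exact ENNReal.ofReal_ne_top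

lemma volume_Jmk_toReal (m k : ℕ) : (volume (Jmk m k)).toReal = (2 ^ m)⁻¹ := by
  rw [volume_Jmk, ENNReal.toReal_ofReal (by positivity)]

lemma Jmk_subset {m m' k k' : ℕ} (h : m ≤ m') (h1 : 2 ^ (m' - m) * k ≤ k')
    (h2 : k' < 2 ^ (m' - m) * (k + 1)) : Jmk m' k' ⊆ Jmk m k := by
  intro t ht
  obtain ⟨ht1, ht2⟩ := ht
  have hd : (2 : ℝ) ^ m' = 2 ^ (m' - m) * 2 ^ m := by
    rw [← pow_add]; congr 1; omega
  have hm : (0:ℝ) < 2 ^ m := by positivity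
  have hm' : (0:ℝ) < 2 ^ m' := by positivity
  constructor
  · have : ((k:ℝ) / 2 ^ m) = (2 ^ (m' - m) * k : ℕ) / 2 ^ m' := by
      push_cast; rw [hd]; field_simp
    rw [this]
    refine le_trans ?_ ht1
    gcongr
  · have : (((k:ℕ) + 1 : ℕ) : ℝ) / 2 ^ m = ((2 ^ (m' - m) * (k + 1) : ℕ) : ℝ) / 2 ^ m' := by
      push_cast; rw [hd]; field_simp
    rw [this]
    refine lt_of_lt_of_le ht2 ?_
    gcongr
    exact_mod_cast h2

lemma Jmk_disjoint {m m' k k' : ℕ} (h2 : k' < 2 ^ (m' - m) * k ∨ 2 ^ (m' - m) * (k + 1) ≤ k')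
    (h : m ≤ m') : Disjoint (Jmk m k) (Jmk m' k') := by
  have hd : (2 : ℝ) ^ m' = 2 ^ (m' - m) * 2 ^ m := by
    rw [← pow_add]; congr 1; omega
  have hm' : (0:ℝ) < 2 ^ m' := by positivity
  rw [Set.disjoint_iff_inter_eq_empty, Jmk, Jmk, Ico_inter_Ico, Ico_eq_empty_iff]
  intro hlt
  simp only [lt_inf_iff, sup_lt_iff] at hlt
  obtain ⟨⟨-, h1⟩, h4, -⟩ := hlt
  -- h1 : k'/2^m' < (k+1)/2^m, h4 : k/2^m < (k'+1)/2^m'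
  rcases h2 with h2 | h2
  · -- k' + 1 ≤ 2^(m'-m) k, so (k'+1)/2^m' ≤ k/2^m, contradicting h4
    have : ((k':ℝ) + 1) ≤ 2 ^ (m' - m) * k := by exact_mod_cast h2
    have hc : (((k':ℕ) + 1 : ℕ) : ℝ) / 2 ^ m' ≤ (k:ℝ) / 2 ^ m := by
      rw [div_le_div_iff₀ hm' (by positivity), hd]
      push_cast
      nlinarith [pow_pos (two_pos (α := ℝ)) m]
    push_cast at hc h4 h1 ⊢
    linarith
  · -- 2^(m'-m)(k+1) ≤ k', so (k+1)/2^m ≤ k'/2^m', contradicting h1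
    have : (2:ℝ) ^ (m' - m) * (k + 1) ≤ k' := by exact_mod_cast h2
    have hc : (((k:ℕ) + 1 : ℕ) : ℝ) / 2 ^ m ≤ (k':ℝ) / 2 ^ m' := by
      rw [div_le_div_iff₀ (by positivity) hm', hd]
      push_cast
      nlinarith [pow_pos (two_pos (α := ℝ)) m]
    push_cast at hc h4 h1 ⊢
    linarith

lemma Jmk_subset_or_disjoint {m m' k k' : ℕ} (h : m ≤ m') :
    Jmk m' k' ⊆ Jmk m k ∨ Disjoint (Jmk m k) (Jmk m' k') := by
  by_cases h1 : 2 ^ (m' - m) * k ≤ k'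
  · by_cases h2 : k' < 2 ^ (m' - m) * (k + 1)
    · exact Or.inl (Jmk_subset h h1 h2)
    · exact Or.inr (Jmk_disjoint (Or.inr (le_of_not_gt h2)) h)
  · exact Or.inr (Jmk_disjoint (Or.inl (lt_of_not_ge h1)) h)

lemma Jmk_eq (m j : ℕ) : Jmk m j = Ico ((j : ℝ) / 2 ^ m) (((j : ℝ) + 1) / 2 ^ m) := by
  unfold Jmk; push_cast; rfl

lemma sum_indicator_Ico {M : Type v} [AddCommMonoid M] (v : M) (m' K : ℕ) (t : ℝ) (N : ℕ) :
    ∑ r ∈ Finset.range N, (Jmk m' (K + r)).indicator (fun _ => v) t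
      = (Ico ((K : ℝ) / 2 ^ m') (((K : ℝ) + N) / 2 ^ m')).indicator (fun _ => v) t := by
  induction N with
  | zero => simp
  | succ N ih =>
      rw [Finset.sum_range_succ, ih]
      have hm' : (0:ℝ) < 2 ^ m' := by positivity
      have hab : ((K : ℝ)) / 2 ^ m' ≤ ((K : ℝ) + N) / 2 ^ m' := by
        apply div_le_div_of_nonneg_right ?_ hm'.le |>.trans_eq rfl
        simp
      have hbc : ((K : ℝ) + N) / 2 ^ m' ≤ ((K : ℝ) + (N + 1)) / 2 ^ m' := by
        apply div_le_div_of_nonneg_right ?_ hm'.le |>.trans_eq rfl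
        linarith
      have hJ : Jmk m' (K + N) = Ico (((K : ℝ) + N) / 2 ^ m') (((K : ℝ) + (N+1)) / 2 ^ m') := by
        rw [Jmk_eq]; push_cast; ring_nf
      rw [hJ, show ((N+1:ℕ):ℝ) = (N:ℝ)+1 from by push_cast; ring,
        ← Set.Ico_union_Ico_eq_Ico hab hbc,
        Set.indicator_union_of_disjoint Set.Ico_disjoint_Ico_same]

/-- Pointwise partition of a dyadic interval into finer dyadic intervals. -/
lemma sum_indicator_Jmk {M : Type v} [AddCommMonoid M] (v : M) {m m' : ℕ} (h : m ≤ m')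
    (k : ℕ) (t : ℝ) :
    ∑ r ∈ Finset.range (2 ^ (m' - m)),
      (Jmk m' (2 ^ (m' - m) * k + r)).indicator (fun _ => v) t
      = (Jmk m k).indicator (fun _ => v) t := by
  rw [sum_indicator_Ico]
  have hm : (0:ℝ) < 2 ^ m := by positivity
  have hd : (2 : ℝ) ^ m' = 2 ^ (m' - m) * 2 ^ m := by
    rw [← pow_add]; congr 1; omega
  have h1 : ((2 ^ (m' - m) * k : ℕ) : ℝ) / 2 ^ m' = (k : ℝ) / 2 ^ m := by
    push_cast; rw [hd]; field_simp
  have h2 : (((2 ^ (m' - m) * k : ℕ) : ℝ) + (2 ^ (m' - m) : ℕ)) / 2 ^ m'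
      = ((k : ℝ) + 1) / 2 ^ m := by
    push_cast; rw [hd]; field_simp
  rw [h1, h2, ← Jmk_eq]

/-! ### The circle group and the `L¹` space -/

abbrev Circ : Type := AddCircle (1 : ℝ)

abbrev LpC : Type := Lp Circ 1 (volume : Measure ℝ)

lemma circ_coe_one : ((1 : ℝ) : Circ) = 0 := by
  rw [QuotientAddGroup.eq_zero_iff]
  exact ⟨1, by simp⟩

lemma circ_norm_le (x : ℝ) : ‖(x : Circ)‖ ≤ |x| := by
  simpa [Real.norm_eq_abs] using QuotientAddGroup.norm_mk_le_norm (S := AddSubgroup.zmultiples (1:ℝ)) (m := x)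

/-- The homomorphism `ℤ/q → ℝ/ℤ` sending `1` to `1/q`. -/
def circHom (q : ℕ) (hq : q ≠ 0) : ZMod q →+ Circ :=
  ZMod.lift q ⟨zmultiplesHom Circ (((q : ℝ)⁻¹ : ℝ) : Circ), by
    have h1 : ((q : ℤ) • (((q : ℝ)⁻¹ : ℝ) : Circ)) = (((q : ℝ) * (q : ℝ)⁻¹ : ℝ) : Circ) := by
      rw [← AddCircle.coe_zsmul]
      congr 1
      rw [zsmul_eq_mul]; push_cast; ring
    show ((q : ℤ) • (((q : ℝ)⁻¹ : ℝ) : Circ)) = 0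
    rw [h1, mul_inv_cancel₀ (show (q:ℝ) ≠ 0 by exact_mod_cast hq)]
    exact circ_coe_one⟩

lemma circHom_natCast (q : ℕ) (hq : q ≠ 0) (c : ℕ) :
    circHom q hq ((c : ℕ) : ZMod q) = (((c : ℝ) / q : ℝ) : Circ) := by
  have : ((c : ℕ) : ZMod q) = ((c : ℤ) : ZMod q) := by push_cast; rfl
  rw [this, circHom, ZMod.lift_coe]
  show (c : ℤ) • (((q : ℝ)⁻¹ : ℝ) : Circ) = _
  rw [← AddCircle.coe_zsmul]
  congr 1
  rw [zsmul_eq_mul]; push_cast; ring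

/-- Indicator of a dyadic interval with a given constant value, as element of `L¹`. -/
def piece (m k : ℕ) (c : Circ) : LpC :=
  indicatorConstLp 1 (measurableSet_Jmk m k) (volume_Jmk_ne_top m k) c

lemma piece_add (m k : ℕ) (c c' : Circ) : piece m k (c + c') = piece m k c + piece m k c' :=
  (indicatorConstLp_add).symm

lemma piece_sub (m k : ℕ) (c c' : Circ) : piece m k (c - c') = piece m k c - piece m k c' :=
  (indicatorConstLp_sub).symm

lemma norm_piece (m k : ℕ) (c : Circ) : ‖piece m k c‖ = ‖c‖ * (2 ^ m)⁻¹ := by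
  rw [piece, norm_indicatorConstLp one_ne_zero ENNReal.one_ne_top, measureReal_def, volume_Jmk_toReal]
  norm_num

/-- `piece` as an additive monoid hom in the constant. -/
def pieceHom (m k : ℕ) : Circ →+ LpC :=
  AddMonoidHom.mk' (piece m k) (piece_add m k)

/-! ### The embedding of the direct sum -/

section Phi

variable (p : ℕ → ℕ) (hp : ∀ i, Nat.Prime (p i))

/-- The component homomorphism. -/
def F (i : ℕ) : ZMod (p i) →+ LpC :=
  (pieceHom (lev i) (pos i)).comp (circHom (p i) (hp i).ne_zero)

/-- The embedding of `⊕ ℤ/pᵢ` into `L¹(ℝ, ℝ/ℤ)`. -/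
def phi : (⨁ i, ZMod (p i)) →+ LpC :=
  DirectSum.toAddMonoid (F p hp)

lemma phi_of (i : ℕ) (a : ZMod (p i)) :
    phi p hp (DirectSum.of (fun j => ZMod (p j)) i a)
      = piece (lev i) (pos i) (circHom (p i) (hp i).ne_zero a) :=
  DirectSum.toAddMonoid_of _ _ _

lemma circHom_val (i : ℕ) (a : ZMod (p i)) :
    circHom (p i) (hp i).ne_zero a = (((a.val : ℝ) / p i : ℝ) : Circ) := by
  haveI : NeZero (p i) := ⟨(hp i).ne_zero⟩
  conv_lhs => rw [← ZMod.natCast_rightInverse (n := p i) a]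
  exact circHom_natCast (p i) (hp i).ne_zero a.val

lemma norm_circHom_le (i : ℕ) (a : ZMod (p i)) :
    ‖circHom (p i) (hp i).ne_zero a‖ ≤ 1 := by
  haveI : NeZero (p i) := ⟨(hp i).ne_zero⟩
  rw [circHom_val p hp]
  refine (circ_norm_le _).trans ?_
  rw [abs_div, abs_of_nonneg (by positivity : (0:ℝ) ≤ (a.val : ℝ)), abs_of_nonneg (by positivity : (0:ℝ) ≤ (p i : ℝ))]
  rw [div_le_one (by exact_mod_cast (hp i).pos)]
  exact_mod_cast (ZMod.val_lt a).le

lemma norm_phi_of_le (i : ℕ) (a : ZMod (p i)) :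
    ‖phi p hp (DirectSum.of (fun j => ZMod (p j)) i a)‖ ≤ (2 ^ lev i)⁻¹ := by
  rw [phi_of, norm_piece]
  calc ‖circHom (p i) (hp i).ne_zero a‖ * (2 ^ lev i)⁻¹
      ≤ 1 * (2 ^ lev i)⁻¹ := by
        apply mul_le_mul_of_nonneg_right (norm_circHom_le p hp i a) (by positivity)
    _ = (2 ^ lev i)⁻¹ := one_mul _

end Phi

/-! ### Finset sums in `Lp` pointwise a.e. -/

lemma coeFn_finsetSum {ι : Type} (s : Finset ι) (f : ι → LpC) :
    ⇑(∑ i ∈ s, f i) =ᵐ[volume] fun t => ∑ i ∈ s, (f i : ℝ → Circ) t := by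
  classical
  induction s using Finset.induction with
  | empty => simp only [Finset.sum_empty]; exact Lp.coeFn_zero Circ 1 (volume : Measure ℝ)
  | insert a s hnot ih =>
      rw [Finset.sum_insert hnot]
      refine (Lp.coeFn_add _ _).trans ?_
      filter_upwards [ih] with t ht
      rw [Pi.add_apply, ht, Finset.sum_insert hnot]

/-! ### A sum of fractions with distinct prime denominators is not an integer -/

lemma sum_div_primes_not_int (p : ℕ → ℕ) (hp : ∀ i, Nat.Prime (p i))
    (hpinj : Function.Injective p) (s' : Finset ℕ) (a : ℕ → ℕ)
    (ha : ∀ j ∈ s', 0 < a j ∧ a j < p j) {i0 : ℕ} (hi0 : i0 ∈ s') (z : ℤ) :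
    (∑ j ∈ s', (a j : ℚ) / p j) ≠ (z : ℚ) := by
  intro heq
  haveI : Fact (Nat.Prime (p i0)) := ⟨hp i0⟩
  set P : ℕ := ∏ j ∈ s', p j with hP
  set Pe : ℕ → ℕ := fun j => ∏ k ∈ s'.erase j, p k with hPe
  have hPj : ∀ j ∈ s', p j * Pe j = P := fun j hj => Finset.mul_prod_erase s' p hj
  have key : ((∑ j ∈ s', a j * Pe j : ℕ) : ℚ) = (z : ℚ) * P := by
    push_cast
    rw [show ∑ j ∈ s', (a j : ℚ) * Pe j = ∑ j ∈ s', ((a j : ℚ) / p j) * P from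
      Finset.sum_congr rfl fun j hj => by
        rw [← hPj j hj]; push_cast
        have hpj : (p j : ℚ) ≠ 0 := by exact_mod_cast (hp j).ne_zero
        field_simp]
    rw [← Finset.sum_mul, heq]
  have keyZ : ((∑ j ∈ s', a j * Pe j : ℕ) : ℤ) = z * (P : ℤ) := by exact_mod_cast key
  have keyM : ((∑ j ∈ s', a j * Pe j : ℕ) : ZMod (p i0)) = (z : ZMod (p i0)) * (P : ℕ) := by
    have := congrArg (fun n : ℤ => (n : ZMod (p i0))) keyZ
    push_cast at this ⊢
    exact this
  have hP0 : ((P : ℕ) : ZMod (p i0)) = 0 := by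
    rw [ZMod.natCast_eq_zero_iff]
    exact Finset.dvd_prod_of_mem p hi0
  rw [hP0, mul_zero] at keyM
  have hsingle : ((∑ j ∈ s', a j * Pe j : ℕ) : ZMod (p i0))
      = (a i0 : ZMod (p i0)) * (Pe i0 : ZMod (p i0)) := by
    push_cast
    refine Finset.sum_eq_single_of_mem i0 hi0 fun j hj hne => ?_
    have : ((Pe j : ℕ) : ZMod (p i0)) = 0 := by
      rw [ZMod.natCast_eq_zero_iff]
      exact Finset.dvd_prod_of_mem p (Finset.mem_erase.mpr ⟨Ne.symm hne, hi0⟩)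
    rw [this, mul_zero]
  rw [hsingle] at keyM
  rcases mul_eq_zero.mp keyM with h | h
  · rw [ZMod.natCast_eq_zero_iff] at h
    have := Nat.le_of_dvd (ha i0 hi0).1 h
    exact absurd (ha i0 hi0).2 (not_lt.mpr this)
  · rw [hPe] at h
    push_cast at h
    obtain ⟨k, hk, hk0⟩ := Finset.prod_eq_zero_iff.mp h
    rw [ZMod.natCast_eq_zero_iff] at hk0
    rcases (hp k).eq_one_or_self_of_dvd (p i0) hk0 with h1 | h1
    · exact (hp i0).one_lt.ne' h1
    · exact (Finset.mem_erase.mp hk).1 (hpinj h1).symm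

lemma circ_sum_ne_zero (p : ℕ → ℕ) (hp : ∀ i, Nat.Prime (p i))
    (hpinj : Function.Injective p) (s' : Finset ℕ) (a : ℕ → ℕ)
    (ha : ∀ j ∈ s', 0 < a j ∧ a j < p j) {i0 : ℕ} (hi0 : i0 ∈ s') :
    (∑ j ∈ s', (((a j : ℝ) / p j : ℝ) : Circ)) ≠ 0 := by
  have hsum : (∑ j ∈ s', (((a j : ℝ) / p j : ℝ) : Circ))
      = ((∑ j ∈ s', (a j : ℝ) / p j : ℝ) : Circ) :=
    (map_sum (QuotientAddGroup.mk' (AddSubgroup.zmultiples (1:ℝ))) _ _).symm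
  rw [hsum]
  intro h0
  rw [QuotientAddGroup.eq_zero_iff, AddSubgroup.mem_zmultiples_iff] at h0
  obtain ⟨z, hz⟩ := h0
  rw [zsmul_eq_mul, mul_one] at hz
  have hq : (∑ j ∈ s', (a j : ℚ) / p j) = (z : ℚ) := by
    have hr : ((∑ j ∈ s', (a j : ℚ) / p j : ℚ) : ℝ) = ((z : ℚ) : ℝ) := by
      push_cast
      exact hz.symm
    exact_mod_cast hr
  exact sum_div_primes_not_int p hp hpinj s' a ha hi0 z hq

/-! ### Injectivity of `phi` -/

lemma phi_injective (p : ℕ → ℕ) (hp : ∀ i, Nat.Prime (p i)) (hmono : StrictMono p) :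
    Function.Injective (phi p hp) := by
  rw [injective_iff_map_eq_zero]
  intro x hx
  by_contra hne
  classical
  set s := DFinsupp.support x with hs
  have hsne : s.Nonempty := by
    rw [Finset.nonempty_iff_ne_empty]
    simpa [hs, DFinsupp.support_eq_empty] using hne
  obtain ⟨i0, hi0⟩ := hsne
  set m : ℕ := s.sup lev with hm
  set Q : Set ℝ := Jmk m (2 ^ (m - lev i0) * pos i0) with hQ
  have hlev : ∀ j ∈ s, lev j ≤ m := fun j hj => Finset.le_sup hj
  have hQsub : Q ⊆ Jmk (lev i0) (pos i0) := by
    refine Jmk_subset (hlev i0 hi0) le_rfl ?_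
    have h2 : 0 < 2 ^ (m - lev i0) := pow_pos (by norm_num) _
    nlinarith [h2]
  -- the value of each summand
  set val : ℕ → Circ := fun j => circHom (p j) (hp j).ne_zero (x j) with hval
  have hphix : phi p hp x = ∑ j ∈ s, piece (lev j) (pos j) (val j) := by
    conv_lhs => rw [← DirectSum.sum_support_of x]
    rw [map_sum]
    exact Finset.sum_congr rfl fun j hj => phi_of p hp j (x j)
  set g : ℝ → Circ := fun t =>
    ∑ j ∈ s, (Jmk (lev j) (pos j)).indicator (fun _ => val j) t with hg
  have hae : ⇑(phi p hp x) =ᵐ[volume] g := by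
    rw [hphix]
    refine (coeFn_finsetSum s _).trans ?_
    have : ∀ᵐ t ∂(volume : Measure ℝ), ∀ j ∈ s,
        (piece (lev j) (pos j) (val j) : ℝ → Circ) t
          = (Jmk (lev j) (pos j)).indicator (fun _ => val j) t :=
      (Filter.eventually_all_finset s).mpr (fun j _ => indicatorConstLp_coeFn)
    filter_upwards [this] with t ht
    exact Finset.sum_congr rfl fun j hj => ht j hj
  have hg0 : ∀ᵐ t ∂(volume : Measure ℝ), g t = 0 := by
    rw [hx] at hae
    filter_upwards [hae.symm, Lp.coeFn_zero Circ 1 (volume : Measure ℝ)] with t h1 h2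
    rw [h1, h2]
    rfl
  -- on Q the function g is the nonzero constant v
  set s' : Finset ℕ := s.filter (fun j => Q ⊆ Jmk (lev j) (pos j)) with hs'
  have hi0' : i0 ∈ s' := Finset.mem_filter.mpr ⟨hi0, hQsub⟩
  have hgQ : ∀ t ∈ Q, g t = ∑ j ∈ s', val j := by
    intro t ht
    show (∑ j ∈ s, (Jmk (lev j) (pos j)).indicator (fun _ => val j) t) = _
    rw [← Finset.sum_filter_add_sum_filter_not s (fun j => Q ⊆ Jmk (lev j) (pos j))]
    have h1 : ∑ j ∈ s', (Jmk (lev j) (pos j)).indicator (fun _ => val j) t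
        = ∑ j ∈ s', val j := by
      refine Finset.sum_congr rfl fun j hj => ?_
      exact Set.indicator_of_mem ((Finset.mem_filter.mp hj).2 ht) _
    have h2 : ∑ j ∈ s.filter (fun j => ¬ Q ⊆ Jmk (lev j) (pos j)),
        (Jmk (lev j) (pos j)).indicator (fun _ => val j) t = 0 := by
      refine Finset.sum_eq_zero fun j hj => ?_
      obtain ⟨hjs, hjn⟩ := Finset.mem_filter.mp hj
      rcases Jmk_subset_or_disjoint (m' := m) (hlev j hjs) with hsub | hdis
      · exact absurd hsub hjn
      · exact Set.indicator_of_notMem (fun hmem => (Set.disjoint_left.mp hdis hmem) ht) _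
    rw [h1, h2, add_zero]
  have hvne : (∑ j ∈ s', val j) ≠ 0 := by
    have : ∀ j ∈ s', val j = (((((x j).val : ℕ) : ℝ) / p j : ℝ) : Circ) := by
      intro j hj
      rw [hval]
      exact circHom_val p hp j (x j)
    rw [Finset.sum_congr rfl this]
    refine circ_sum_ne_zero p hp hmono.injective s' (fun j => (x j).val) ?_ hi0'
    intro j hj
    haveI : NeZero (p j) := ⟨(hp j).ne_zero⟩
    have hxj : x j ≠ 0 := by
      have := (Finset.mem_filter.mp hj).1
      rwa [hs, DFinsupp.mem_support_iff] at this
    constructor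
    · rw [Nat.pos_iff_ne_zero]
      intro h0
      exact hxj (by rwa [ZMod.val_eq_zero] at h0)
    · exact ZMod.val_lt _
  -- contradiction with positivity of the measure of Q
  have hQnull : volume Q = 0 := by
    refine measure_mono_null (fun t ht => ?_) (MeasureTheory.ae_iff.mp hg0)
    show ¬ g t = 0
    rw [hgQ t ht]
    exact hvne
  rw [hQ, volume_Jmk] at hQnull
  simp only [ENNReal.ofReal_eq_zero] at hQnull
  have : (0:ℝ) < (2 ^ m)⁻¹ := by positivity
  linarith

/-! ### More helpers -/

lemma prime_lower_bound (p : ℕ → ℕ) (hp : ∀ i, Nat.Prime (p i)) (hmono : StrictMono p) :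
    ∀ n, n + 2 ≤ p n := by
  intro n
  induction n with
  | zero => exact (hp 0).two_le
  | succ n ih =>
      have h := hmono (show n < n + 1 by omega)
      omega

lemma div_approx (a q pi : ℕ) (hpi : 0 < pi) (hq : 0 < q) :
    |(((a * q / pi : ℕ) : ℝ)) / q - (a : ℝ) / pi| ≤ (q : ℝ)⁻¹ := by
  set c : ℕ := a * q / pi with hc
  set r : ℕ := (a * q) % pi with hr
  have hmod : pi * c + r = a * q := Nat.div_add_mod (a * q) pi
  have hrlt : r < pi := Nat.mod_lt _ hpi
  have hpiR : (0:ℝ) < pi := by exact_mod_cast hpi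
  have hqR : (0:ℝ) < q := by exact_mod_cast hq
  have hmodR : (pi : ℝ) * c + r = a * q := by exact_mod_cast hmod
  have heq : ((c : ℝ)) / q - (a : ℝ) / pi = -(r / (pi * q)) := by
    field_simp
    linear_combination hmodR
  rw [heq, abs_neg, abs_of_nonneg (by positivity)]
  rw [div_le_iff₀ (by positivity)]
  have : (r : ℝ) ≤ pi := by exact_mod_cast hrlt.le
  calc (r:ℝ) ≤ pi := this
    _ = (q:ℝ)⁻¹ * (pi * q) := by field_simp
    _ ≤ _ := le_refl _

lemma piece_partition {m m' : ℕ} (h : m ≤ m') (k : ℕ) (c : Circ) :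
    piece m k c = ∑ r ∈ Finset.range (2 ^ (m' - m)), piece m' (2 ^ (m' - m) * k + r) c := by
  refine (MeasureTheory.Lp.ext (μ := (volume : Measure ℝ)) ?_).symm
  refine (coeFn_finsetSum _ _).trans ?_
  have h2 : ∀ᵐ t ∂(volume : Measure ℝ), ∀ r ∈ Finset.range (2 ^ (m' - m)),
      (piece m' (2 ^ (m' - m) * k + r) : Circ → LpC) c t
        = (Jmk m' (2 ^ (m' - m) * k + r)).indicator (fun _ => c) t :=
    (Filter.eventually_all_finset _).mpr (fun r _ => indicatorConstLp_coeFn)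
  filter_upwards [h2, (indicatorConstLp_coeFn
    (hs := measurableSet_Jmk m k) (hμs := volume_Jmk_ne_top m k) (c := c)).symm] with t ht h3
  calc (∑ r ∈ Finset.range (2 ^ (m' - m)), (piece m' (2 ^ (m' - m) * k + r) c : ℝ → Circ) t)
      = ∑ r ∈ Finset.range (2 ^ (m' - m)),
          (Jmk m' (2 ^ (m' - m) * k + r)).indicator (fun _ => c) t :=
        Finset.sum_congr rfl fun r hr => ht r hr
    _ = (Jmk m k).indicator (fun _ => c) t := sum_indicator_Jmk c h k t
    _ = (piece m k c : ℝ → Circ) t := h3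

/-! ### The family of small subgroups and the approximation lemma -/

def Hfam (p : ℕ → ℕ) (M : ℕ) : Set (AddSubgroup (⨁ i, ZMod (p i))) :=
  {H | ∃ n : ℕ, M ≤ lev n ∧ H = (DirectSum.of (fun j => ZMod (p j)) n).range}

lemma coe_sub_circ (x y : ℝ) : ((x : Circ)) - (y : Circ) = ((x - y : ℝ) : Circ) :=
  (map_sub (QuotientAddGroup.mk' (AddSubgroup.zmultiples (1:ℝ))) x y).symm

lemma approx_element (p : ℕ → ℕ) (hp : ∀ i, Nat.Prime (p i)) (hmono : StrictMono p)
    (i : ℕ) (a : ZMod (p i)) (M : ℕ) (δ : ℝ) (hδ : 0 < δ) :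
    ∃ y : ⨁ j, ZMod (p j),
      y ∈ AddSubgroup.closure (⋃ H ∈ Hfam p M, (H : Set (⨁ j, ZMod (p j)))) ∧
      ‖phi p hp y - phi p hp (DirectSum.of (fun j => ZMod (p j)) i a)‖ < δ := by
  classical
  haveI : NeZero (p i) := ⟨(hp i).ne_zero⟩
  obtain ⟨n0, hn0⟩ := pow_unbounded_of_one_lt (R := ℝ) δ⁻¹ one_lt_two
  set m' := max n0 (max M (lev i)) with hm'
  have hMm : M ≤ m' := le_trans (le_max_left _ _) (le_max_right _ _)
  have him : lev i ≤ m' := le_trans (le_max_right _ _) (le_max_right _ _)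
  have hδm : ((2:ℝ) ^ m')⁻¹ < δ := by
    have h1 : (2:ℝ) ^ n0 ≤ 2 ^ m' := by
      apply pow_le_pow_right₀ one_le_two (le_max_left _ _)
    have h2 : δ⁻¹ < 2 ^ m' := lt_of_lt_of_le hn0 h1
    have h3 : (0:ℝ) < δ⁻¹ := by positivity
    calc ((2:ℝ) ^ m')⁻¹ < (δ⁻¹)⁻¹ := by
          apply inv_strictAnti₀ h3 h2
      _ = δ := inv_inv δ
  have hkmax : ∀ r, r < 2 ^ (m' - lev i) → 2 ^ (m' - lev i) * pos i + r < 2 ^ m' := by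
    intro r hr
    have h1 : pos i < 2 ^ lev i := pos_lt i
    have h2 : 2 ^ (m' - lev i) * 2 ^ lev i = 2 ^ m' := by
      rw [← pow_add]; congr 1; omega
    calc 2 ^ (m' - lev i) * pos i + r < 2 ^ (m' - lev i) * pos i + 2 ^ (m' - lev i) := by omega
      _ = 2 ^ (m' - lev i) * (pos i + 1) := by ring
      _ ≤ 2 ^ (m' - lev i) * 2 ^ lev i := Nat.mul_le_mul_left _ (by omega)
      _ = 2 ^ m' := h2
  set c : ℕ → ℕ := fun r => a.val * p (idx m' (2 ^ (m' - lev i) * pos i + r)) / p i with hc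
  set y : ⨁ j, ZMod (p j) := ∑ r ∈ Finset.range (2 ^ (m' - lev i)),
      DirectSum.of (fun j => ZMod (p j)) (idx m' (2 ^ (m' - lev i) * pos i + r))
        ((c r : ℕ) : ZMod (p (idx m' (2 ^ (m' - lev i) * pos i + r)))) with hy
  refine ⟨y, ?_, ?_⟩
  · rw [hy]
    apply AddSubgroup.sum_mem
    intro r hr
    apply AddSubgroup.subset_closure
    refine Set.mem_biUnion
      (show ((DirectSum.of (fun j => ZMod (p j))
          (idx m' (2 ^ (m' - lev i) * pos i + r))).range) ∈ Hfam p M from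
        ⟨idx m' (2 ^ (m' - lev i) * pos i + r), ?_, rfl⟩) ⟨_, rfl⟩
    rw [lev_idx (hkmax r (Finset.mem_range.mp hr))]
    exact hMm
  · have hphiy : phi p hp y = ∑ r ∈ Finset.range (2 ^ (m' - lev i)),
        piece m' (2 ^ (m' - lev i) * pos i + r)
          ((((c r : ℝ) / p (idx m' (2 ^ (m' - lev i) * pos i + r)) : ℝ) : Circ)) := by
      rw [hy, map_sum]
      refine Finset.sum_congr rfl fun r hr => ?_
      rw [phi_of, lev_idx (hkmax r (Finset.mem_range.mp hr)),
        pos_idx (hkmax r (Finset.mem_range.mp hr)), circHom_natCast]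
    have hphia : phi p hp (DirectSum.of (fun j => ZMod (p j)) i a)
        = ∑ r ∈ Finset.range (2 ^ (m' - lev i)),
            piece m' (2 ^ (m' - lev i) * pos i + r) ((((a.val : ℝ) / p i : ℝ) : Circ)) := by
      rw [phi_of, circHom_val p hp, piece_partition him (pos i)]
    rw [hphiy, hphia, ← Finset.sum_sub_distrib]
    have hterm : ∀ r ∈ Finset.range (2 ^ (m' - lev i)),
        piece m' (2 ^ (m' - lev i) * pos i + r)
            ((((c r : ℝ) / p (idx m' (2 ^ (m' - lev i) * pos i + r)) : ℝ) : Circ))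
          - piece m' (2 ^ (m' - lev i) * pos i + r) ((((a.val : ℝ) / p i : ℝ) : Circ))
        = piece m' (2 ^ (m' - lev i) * pos i + r)
            ((((c r : ℝ) / p (idx m' (2 ^ (m' - lev i) * pos i + r)) - (a.val : ℝ) / p i : ℝ) : Circ)) := by
      intro r hr
      rw [← piece_sub, coe_sub_circ]
    rw [Finset.sum_congr rfl hterm]
    have hbound : ∀ r ∈ Finset.range (2 ^ (m' - lev i)),
        ‖piece m' (2 ^ (m' - lev i) * pos i + r)
            ((((c r : ℝ) / p (idx m' (2 ^ (m' - lev i) * pos i + r)) - (a.val : ℝ) / p i : ℝ) : Circ))‖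
          ≤ ((2:ℝ) ^ m')⁻¹ * ((2:ℝ) ^ m')⁻¹ := by
      intro r hr
      rw [norm_piece]
      have h2m : ((2:ℝ) ^ m')⁻¹ = ((2 ^ m' : ℕ) : ℝ)⁻¹ := by push_cast; ring
      refine mul_le_mul ?_ ?_ (by positivity) (by positivity)
      · refine (circ_norm_le _).trans ?_
        refine le_trans (div_approx a.val (p (idx m' (2 ^ (m' - lev i) * pos i + r))) (p i)
          (hp i).pos (hp _).pos) ?_
        have h1 : 2 ^ m' ≤ p (idx m' (2 ^ (m' - lev i) * pos i + r)) := by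
          have h2 := prime_lower_bound p hp hmono (idx m' (2 ^ (m' - lev i) * pos i + r))
          have h3 := idx_ge m' (2 ^ (m' - lev i) * pos i + r)
          omega
        have h4 : ((2:ℝ)) ^ m' ≤ (p (idx m' (2 ^ (m' - lev i) * pos i + r)) : ℝ) := by
          exact_mod_cast h1
        exact inv_anti₀ (by positivity) h4
      · exact le_refl _
    calc ‖∑ r ∈ Finset.range (2 ^ (m' - lev i)), piece m' (2 ^ (m' - lev i) * pos i + r)
            ((((c r : ℝ) / p (idx m' (2 ^ (m' - lev i) * pos i + r)) - (a.val : ℝ) / p i : ℝ) : Circ))‖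
        ≤ ∑ r ∈ Finset.range (2 ^ (m' - lev i)), ‖piece m' (2 ^ (m' - lev i) * pos i + r)
            ((((c r : ℝ) / p (idx m' (2 ^ (m' - lev i) * pos i + r)) - (a.val : ℝ) / p i : ℝ) : Circ))‖ :=
          norm_sum_le _ _
      _ ≤ ∑ r ∈ Finset.range (2 ^ (m' - lev i)), ((2:ℝ) ^ m')⁻¹ * ((2:ℝ) ^ m')⁻¹ :=
          Finset.sum_le_sum hbound
      _ = (2:ℝ) ^ (m' - lev i) * (((2:ℝ) ^ m')⁻¹ * ((2:ℝ) ^ m')⁻¹) := by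
          rw [Finset.sum_const, Finset.card_range]; push_cast; ring
      _ ≤ (2:ℝ) ^ m' * (((2:ℝ) ^ m')⁻¹ * ((2:ℝ) ^ m')⁻¹) := by
          apply mul_le_mul_of_nonneg_right ?_ (by positivity)
          exact pow_le_pow_right₀ one_le_two (Nat.sub_le _ _)
      _ = ((2:ℝ) ^ m')⁻¹ := by field_simp
      _ < δ := hδm

end
end SSGPAux

/-- For a strictly increasing sequence of primes `p i`, the direct sum
`⊕_{i<ω} ℤ/p_iℤ` admits an SSGP topology. -/
theorem exists_ssgp_topology_directSum_zmod (p : ℕ → ℕ) (hp : ∀ i, Nat.Prime (p i))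
    (hmono : StrictMono p) :
    ∃ t : TopologicalSpace (⨁ i, ZMod (p i)),
      haveI := t
      ∃ tg : IsTopologicalAddGroup (⨁ i, ZMod (p i)),
        haveI := tg
        T2Space (⨁ i, ZMod (p i)) ∧ AddHasSSGP (⨁ i, ZMod (p i)) := by
  classical
  let φ : (⨁ i, ZMod (p i)) →+ SSGPAux.LpC := SSGPAux.phi p hp
  letI t : TopologicalSpace (⨁ i, ZMod (p i)) := TopologicalSpace.induced φ inferInstance
  refine ⟨t, ?_⟩
  haveI tg : IsTopologicalAddGroup (⨁ i, ZMod (p i)) := topologicalAddGroup_induced φ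
  refine ⟨tg, ?_, ?_⟩
  · -- Hausdorff
    have hemb : Topology.IsEmbedding φ :=
      ⟨⟨rfl⟩, SSGPAux.phi_injective p hp hmono⟩
    exact hemb.t2Space
  · -- SSGP
    intro U hU
    rw [nhds_induced] at hU
    obtain ⟨V, hV, hVU⟩ := Filter.mem_comap.mp hU
    rw [map_zero] at hV
    obtain ⟨ε, hε, hball⟩ := Metric.mem_nhds_iff.mp hV
    obtain ⟨M, hM⟩ := pow_unbounded_of_one_lt (R := ℝ) ε⁻¹ one_lt_two
    have hMε : ((2:ℝ) ^ M)⁻¹ < ε := by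
      have h3 : (0:ℝ) < ε⁻¹ := by positivity
      calc ((2:ℝ) ^ M)⁻¹ < (ε⁻¹)⁻¹ := by apply inv_strictAnti₀ h3 hM
        _ = ε := inv_inv ε
    refine ⟨SSGPAux.Hfam p M, ?_, ?_⟩
    · rintro H ⟨n, hn, rfl⟩ x hx
      obtain ⟨a, rfl⟩ := hx
      apply hVU
      show φ (DirectSum.of (fun j => ZMod (p j)) n a) ∈ V
      apply hball
      rw [Metric.mem_ball, dist_zero_right]
      calc ‖φ (DirectSum.of (fun j => ZMod (p j)) n a)‖
          ≤ ((2:ℝ) ^ SSGPAux.lev n)⁻¹ := SSGPAux.norm_phi_of_le p hp n a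
        _ ≤ ((2:ℝ) ^ M)⁻¹ := by
            apply inv_anti₀ (by positivity)
            exact pow_le_pow_right₀ one_le_two hn
        _ < ε := hMε
    · -- density
      set K := AddSubgroup.closure
        (⋃ H ∈ SSGPAux.Hfam p M, (H : Set (⨁ j, ZMod (p j)))) with hK
      rw [dense_iff_closure_eq]
      apply Set.eq_univ_of_forall
      intro x
      induction x using DirectSum.induction_on with
      | zero => exact subset_closure K.zero_mem
      | of i a =>
          rw [mem_closure_iff_nhds]
          intro W hW
          rw [nhds_induced] at hW
          obtain ⟨V', hV', hV'W⟩ := Filter.mem_comap.mp hW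
          obtain ⟨δ, hδ, hball'⟩ := Metric.mem_nhds_iff.mp hV'
          obtain ⟨y, hyK, hy⟩ := SSGPAux.approx_element p hp hmono i a M δ hδ
          refine ⟨y, ?_, hyK⟩
          apply hV'W
          show φ y ∈ V'
          apply hball'
          rw [Metric.mem_ball, dist_eq_norm]
          exact hy
      | add x y hx hy =>
          exact K.topologicalClosure.add_mem hx hy
end
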